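/- arXiv:1810.01583 — 11 statements merged into one kernel-verified Lean document; each statement's English description precedes it below -/
import Mathlib

section
/- Let k and d be positive integers and let 𝒟 be a nonempty finite family of k-element subsets of ℕ. Then there exist a finite simple graph G and an injective map ι from the union ⋃𝒟 into the vertex set of G such that a set S of vertices of G is a minimum distance-d-dominating set of G if and only if S is the image under ι of some member of 𝒟. -/
/-- `S` is a distance-`d`-dominating set of `G`: every vertex of `G` is within
graph distance `d` of some vertex of `S`. -/
def IsDistDomSet {V : Type*} (G : SimpleGraph V) (d : ℕ) (S : Finset V) : Prop :=
  ∀ v : V, ∃ s ∈ S, ∃ p : G.Walk s v, p.length ≤ d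

/-- `S` is a minimum distance-`d`-dominating set of `G`: a distance-`d`-dominating
set of smallest cardinality. -/
def IsMinDistDomSet {V : Type*} (G : SimpleGraph V) (d : ℕ) (S : Finset V) : Prop :=
  IsDistDomSet G d S ∧ ∀ T : Finset V, IsDistDomSet G d T → S.card ≤ T.card

namespace DomCon

variable (k d : ℕ) (𝒟 : Finset (Finset ℕ))

def L : Finset ℕ := 𝒟.sup id

def NN : ℕ := (L 𝒟).sup id + 1

def dum : Finset ℕ := (Finset.range (2*k)).image (fun i => NN 𝒟 + i)

def W : Finset ℕ := L 𝒟 ∪ dum k 𝒟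

def Bad : Finset (Finset ℕ) := ((W k 𝒟).powersetCard k).filter (· ∉ 𝒟)

abbrev V := {x : ℕ // x ∈ W k 𝒟} ⊕ ({A : Finset ℕ // A ∈ Bad k 𝒟} × Fin d)

def adj : V k d 𝒟 → V k d 𝒟 → Prop
  | .inl u, .inl v => u ≠ v
  | .inl u, .inr (A, i) => i.val = d - 1 ∧ u.1 ∉ A.1
  | .inr (A, i), .inl u => i.val = d - 1 ∧ u.1 ∉ A.1
  | .inr (A, i), .inr (B, j) => A = B ∧ (i.val + 1 = j.val ∨ j.val + 1 = i.val)

def G : SimpleGraph (V k d 𝒟) where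
  Adj := adj k d 𝒟
  symm := by
    constructor; rintro (u | ⟨A, i⟩) (v | ⟨B, j⟩) h <;> simp [adj] at h ⊢ <;> tauto
  loopless := by
    constructor; rintro (u | ⟨A, i⟩) h <;> simp [adj] at h

def phi (A : Finset ℕ) : V k d 𝒟 → ℕ
  | .inl u => if u.1 ∈ A then d + 1 else d
  | .inr (B, i) => if B.1 = A then i.val else d + 1

lemma phi_adj (A : Finset ℕ) {a b : V k d 𝒟} (h : (G k d 𝒟).Adj a b) :
    phi k d 𝒟 A a ≤ phi k d 𝒟 A b + 1 := by
  rcases a with u | ⟨B, i⟩ <;> rcases b with v | ⟨C, j⟩ <;>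
    simp only [G, adj] at h <;> simp only [phi]
  · split <;> split <;> omega
  · obtain ⟨hj, hv⟩ := h
    rcases eq_or_ne C.1 A with hC | hC
    · have : u.1 ∉ A := hC ▸ hv
      simp [hC, this]
      omega
    · simp [hC]
      split <;> omega
  · split <;> split <;> omega
  · obtain ⟨hBC, hij⟩ := h
    rcases eq_or_ne B.1 A with hB | hB
    · have hC : C.1 = A := by rw [← hBC, hB]
      simp [hB, hC]; omega
    · have hC : C.1 ≠ A := by rw [← hBC]; exact hB
      simp [hB, hC]

lemma phi_walk (A : Finset ℕ) {a b : V k d 𝒟} (p : (G k d 𝒟).Walk a b) :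
    phi k d 𝒟 A a ≤ phi k d 𝒟 A b + p.length := by
  induction p with
  | nil => simp
  | cons h q ih =>
      have := phi_adj k d 𝒟 A h
      simp only [SimpleGraph.Walk.length_cons]
      omega

variable (hd : 0 < d)

/-- the tip of the gadget path for a bad set `A`. -/
def tip (A : {A : Finset ℕ // A ∈ Bad k 𝒟}) : V k d 𝒟 := .inr (A, ⟨0, hd⟩)

lemma tip_lower {A : {A : Finset ℕ // A ∈ Bad k 𝒟}} {s : V k d 𝒟}
    (p : (G k d 𝒟).Walk s (tip k d 𝒟 hd A)) (hp : p.length ≤ d) :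
    (∃ u : {x : ℕ // x ∈ W k 𝒟}, s = .inl u ∧ u.1 ∉ A.1) ∨
    (∃ i : Fin d, s = .inr (A, i)) := by
  have h := phi_walk k d 𝒟 A.1 p
  have htip : phi k d 𝒟 A.1 (tip k d 𝒟 hd A) = 0 := by simp [phi, tip]
  rw [htip] at h
  rcases s with u | ⟨B, i⟩
  · left
    refine ⟨u, rfl, ?_⟩
    intro hu
    simp [phi, hu] at h
    omega
  · right
    have hB : B = A := by
      by_contra hne
      have : B.1 ≠ A.1 := fun h' => hne (Subtype.ext h')
      simp [phi, this] at h
      omega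
    exact ⟨i, by rw [hB]⟩

/-- descending walk inside a gadget path -/
lemma walk_desc (B : {A : Finset ℕ // A ∈ Bad k 𝒟}) :
    ∀ (n : ℕ) (i j : Fin d), j.val = i.val + n →
      ∃ p : (G k d 𝒟).Walk (.inr (B, j)) (.inr (B, i)), p.length = n := by
  intro n
  induction n with
  | zero =>
      intro i j hij
      have : j = i := Fin.ext (by omega)
      subst this
      exact ⟨SimpleGraph.Walk.nil, rfl⟩
  | succ n ih =>
      intro i j hij
      have hi' : i.val + 1 < d := by have := j.isLt; omega
      set i' : Fin d := ⟨i.val + 1, hi'⟩ with hi'def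
      obtain ⟨p, hp⟩ := ih i' j (by simp [hi'def]; omega)
      have hadj : (G k d 𝒟).Adj (.inr (B, i')) (.inr (B, i)) := by
        have : adj k d 𝒟 (.inr (B, i')) (.inr (B, i)) := ⟨rfl, Or.inr (by simp [hi'def])⟩
        exact this
      exact ⟨p.concat hadj, by simp [hp]⟩

lemma walk_from_W {u : ℕ} (hu : u ∈ W k 𝒟) (B : {A : Finset ℕ // A ∈ Bad k 𝒟})
    (hu' : u ∉ B.1) (i : Fin d) :
    ∃ p : (G k d 𝒟).Walk (.inl ⟨u, hu⟩) (.inr (B, i)), p.length ≤ d := by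
  have hhub : d - 1 < d := by have := i.isLt; omega
  obtain ⟨p, hp⟩ := walk_desc k d 𝒟 B (d - 1 - i.val) i ⟨d - 1, hhub⟩ (by
    show d - 1 = i.val + (d - 1 - i.val); have := i.isLt; omega)
  have hadj : (G k d 𝒟).Adj (.inl ⟨u, hu⟩) (.inr (B, ⟨d - 1, hhub⟩)) := by
    have : adj k d 𝒟 (.inl ⟨u, hu⟩) (.inr (B, ⟨d - 1, hhub⟩)) := ⟨rfl, hu'⟩
    exact this
  refine ⟨SimpleGraph.Walk.cons hadj p, ?_⟩
  simp [hp]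
  omega


lemma subset_L {D : Finset ℕ} (hD : D ∈ 𝒟) : D ⊆ L 𝒟 :=
  Finset.le_sup (f := id) hD

lemma L_subset_W : L 𝒟 ⊆ W k 𝒟 := Finset.subset_union_left

lemma dum_subset_W : dum k 𝒟 ⊆ W k 𝒟 := Finset.subset_union_right

lemma not_mem_L_of_mem_dum {x : ℕ} (hx : x ∈ dum k 𝒟) : x ∉ L 𝒟 := by
  intro hxL
  have h1 : x ≤ (L 𝒟).sup id := Finset.le_sup (f := id) hxL
  simp only [dum, Finset.mem_image, Finset.mem_range] at hx
  obtain ⟨i, _, rfl⟩ := hx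
  simp only [NN] at h1
  omega

lemma card_dum : (dum k 𝒟).card = 2 * k := by
  rw [dum, Finset.card_image_of_injective _ (fun a b h => by omega)]
  simp

lemma NN_mem_W (hk : 0 < k) : NN 𝒟 ∈ W k 𝒟 := by
  apply dum_subset_W
  simp only [dum, Finset.mem_image, Finset.mem_range]
  exact ⟨0, by omega, by omega⟩

/-- A `k`-subset of `W` containing a dummy element is bad. -/
lemma mem_Bad {A : Finset ℕ} (hAW : A ⊆ W k 𝒟) (hAcard : A.card = k)
    {x : ℕ} (hxA : x ∈ A) (hxd : x ∈ dum k 𝒟) : A ∈ Bad k 𝒟 := by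
  simp only [Bad, Finset.mem_filter, Finset.mem_powersetCard]
  refine ⟨⟨hAW, hAcard⟩, fun hA𝒟 => ?_⟩
  exact not_mem_L_of_mem_dum k 𝒟 hxd (subset_L 𝒟 hA𝒟 hxA)

def iota (hk : 0 < k) : ℕ → V k d 𝒟 := fun n =>
  if h : n ∈ W k 𝒟 then .inl ⟨n, h⟩ else .inl ⟨NN 𝒟, NN_mem_W k 𝒟 hk⟩

lemma iota_eq (hk : 0 < k) {n : ℕ} (hn : n ∈ W k 𝒟) :
    iota k d 𝒟 hk n = .inl ⟨n, hn⟩ := dif_pos hn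

lemma iota_injOn (hk : 0 < k) : Set.InjOn (iota k d 𝒟 hk) ↑(W k 𝒟) := by
  intro a ha b hb hab
  rw [Finset.mem_coe] at ha hb
  rw [iota_eq k d 𝒟 hk ha, iota_eq k d 𝒟 hk hb] at hab
  simpa using hab

lemma card_image_iota (hk : 0 < k) {D : Finset ℕ} (hD : D ⊆ W k 𝒟) :
    (D.image (iota k d 𝒟 hk)).card = D.card :=
  Finset.card_image_of_injOn ((iota_injOn k d 𝒟 hk).mono (by exact_mod_cast hD))

lemma image_dominates (hk : 0 < k) (hd0 : 0 < d) (hcard : ∀ D ∈ 𝒟, D.card = k)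
    {D : Finset ℕ} (hD : D ∈ 𝒟) :
    IsDistDomSet (G k d 𝒟) d (D.image (iota k d 𝒟 hk)) := by
  have hDW : D ⊆ W k 𝒟 := (subset_L 𝒟 hD).trans (L_subset_W k 𝒟)
  have hDne : D.Nonempty := by
    rw [← Finset.card_pos, hcard D hD]; exact hk
  rintro (w | ⟨B, i⟩)
  · by_cases h : w.1 ∈ D
    · refine ⟨.inl w, ?_, .nil, by simp⟩
      rw [Finset.mem_image]
      exact ⟨w.1, h, by rw [iota_eq k d 𝒟 hk w.2]⟩
    · obtain ⟨u, hu⟩ := hDne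
      have huW := hDW hu
      have hadj : (G k d 𝒟).Adj (.inl ⟨u, huW⟩) (.inl w) := by
        have : adj k d 𝒟 (.inl ⟨u, huW⟩) (.inl w) := by
          intro heq
          exact h (by rw [← heq]; exact hu)
        exact this
      refine ⟨.inl ⟨u, huW⟩, ?_, .cons hadj .nil, by simpa using Nat.succ_le_of_lt hd0⟩
      rw [Finset.mem_image]
      exact ⟨u, hu, by rw [iota_eq k d 𝒟 hk huW]⟩
  · have hB := B.2
    simp only [Bad, Finset.mem_filter, Finset.mem_powersetCard] at hB
    have hne : ¬ D ⊆ B.1 := by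
      intro hsub
      have : D = B.1 := Finset.eq_of_subset_of_card_le hsub (by rw [hB.1.2, hcard D hD])
      exact hB.2 (this ▸ hD)
    obtain ⟨u, huD, huB⟩ := Finset.not_subset.mp hne
    have huW := hDW huD
    obtain ⟨p, hp⟩ := walk_from_W k d 𝒟 huW B huB i
    refine ⟨.inl ⟨u, huW⟩, ?_, p, hp⟩
    rw [Finset.mem_image]
    exact ⟨u, huD, by rw [iota_eq k d 𝒟 hk huW]⟩

def val1 : V k d 𝒟 → ℕ
  | .inl w => w.1
  | .inr _ => 0

lemma key (hk : 0 < k) (hd0 : 0 < d) (hcard : ∀ D ∈ 𝒟, D.card = k)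
    {S : Finset (V k d 𝒟)} (hS : IsDistDomSet (G k d 𝒟) d S) (hle : S.card ≤ k) :
    ∃ D ∈ 𝒟, S = D.image (iota k d 𝒟 hk) := by
  classical
  set SL := S.filter (fun v => v.isLeft) with hSL
  set SR := S.filter (fun v => ¬ v.isLeft) with hSR
  set SW := SL.image (val1 k d 𝒟) with hSW
  have hcards : SL.card + SR.card = S.card :=
    Finset.card_filter_add_card_filter_not _
  have hSLinj : Set.InjOn (val1 k d 𝒟) ↑SL := by
    intro a ha b hb hab
    simp only [hSL, Finset.coe_filter, Set.mem_setOf_eq] at ha hb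
    rcases a with w | x
    · rcases b with w' | x'
      · simp only [val1] at hab
        exact congrArg Sum.inl (Subtype.ext hab)
      · simp at hb
    · simp at ha
  have hSWcard : SW.card = SL.card := Finset.card_image_of_injOn hSLinj
  have hSWsubW : SW ⊆ W k 𝒟 := by
    intro n hn
    simp only [hSW, Finset.mem_image] at hn
    obtain ⟨v, hv, rfl⟩ := hn
    simp only [hSL, Finset.mem_filter] at hv
    rcases v with w | x
    · exact w.2
    · simp at hv
  have hmemSW : ∀ (w : {x : ℕ // x ∈ W k 𝒟}), Sum.inl w ∈ S → w.1 ∈ SW := by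
    intro w hw
    simp only [hSW, Finset.mem_image]
    refine ⟨.inl w, ?_, rfl⟩
    simp only [hSL, Finset.mem_filter]
    exact ⟨hw, rfl⟩
  have tipforce : ∀ (A : Finset ℕ) (hA : A ∈ Bad k 𝒟), SW ⊆ A →
      ∃ v ∈ SR, ∃ (hA' : A ∈ Bad k 𝒟) (i : Fin d), v = Sum.inr (⟨A, hA'⟩, i) := by
    intro A hA hsub
    obtain ⟨s, hsS, p, hp⟩ := hS (tip k d 𝒟 hd0 ⟨A, hA⟩)
    rcases tip_lower k d 𝒟 hd0 p hp with ⟨u, rfl, hu⟩ | ⟨i, rfl⟩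
    · exact absurd (hsub (hmemSW u hsS)) hu
    · refine ⟨_, ?_, hA, i, rfl⟩
      simp only [hSR, Finset.mem_filter]
      exact ⟨hsS, by simp⟩
  have hSWle : SW.card ≤ k := by
    have := Finset.card_filter_le S (fun v => v.isLeft)
    omega
  have hSWk : SW.card = k := by
    by_contra hne
    have hlt : SW.card < k := lt_of_le_of_ne hSWle hne
    have hj1 : 1 ≤ k - SW.card := by omega
    set j := k - SW.card with hj
    have hdumcard : j + 1 ≤ (dum k 𝒟 \ SW).card := by
      have h1 := Finset.card_le_card_sdiff_add_card (s := dum k 𝒟) (t := SW)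
      have h2 := card_dum k 𝒟
      omega
    obtain ⟨Y, hYsub, hYcard⟩ := Finset.exists_subset_card_eq hdumcard
    set 𝒜 := (Y.powersetCard j).image (fun X => SW ∪ X) with h𝒜
    have hdisj : ∀ X ∈ Y.powersetCard j, Disjoint SW X := by
      intro X hX
      rw [Finset.mem_powersetCard] at hX
      exact Finset.disjoint_left.mpr
        (fun a haSW haX => (Finset.mem_sdiff.mp (hYsub (hX.1 haX))).2 haSW)
    have h𝒜card : 𝒜.card = j + 1 := by
      rw [h𝒜, Finset.card_image_of_injOn, Finset.card_powersetCard, hYcard,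
        Nat.choose_succ_self_right]
      intro X hX X' hX' hXX'
      rw [Finset.mem_coe] at hX hX'
      have d1 := hdisj X hX
      have d2 := hdisj X' hX'
      have hXX2 : SW ∪ X = SW ∪ X' := hXX'
      calc X = (SW ∪ X) \ SW := (Finset.union_sdiff_cancel_left d1).symm
        _ = (SW ∪ X') \ SW := by rw [hXX2]
        _ = X' := Finset.union_sdiff_cancel_left d2
    have h𝒜bad : ∀ A ∈ 𝒜, A ∈ Bad k 𝒟 ∧ SW ⊆ A := by
      intro A hA
      simp only [h𝒜, Finset.mem_image] at hA
      obtain ⟨X, hX, rfl⟩ := hA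
      have hXmem := hX
      rw [Finset.mem_powersetCard] at hXmem
      have hXsub : X ⊆ dum k 𝒟 \ SW := hXmem.1.trans hYsub
      have hXne : X.Nonempty := by
        rw [← Finset.card_pos, hXmem.2]; omega
      obtain ⟨x, hx⟩ := hXne
      have hAW : SW ∪ X ⊆ W k 𝒟 := by
        apply Finset.union_subset hSWsubW
        exact fun a ha => dum_subset_W k 𝒟 (Finset.mem_sdiff.mp (hXsub ha)).1
      have hAcard : (SW ∪ X).card = k := by
        rw [Finset.card_union_of_disjoint (hdisj X hX), hXmem.2]
        omega
      refine ⟨mem_Bad k 𝒟 hAW hAcard (Finset.mem_union_right _ hx)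
        (Finset.mem_sdiff.mp (hXsub hx)).1, Finset.subset_union_left⟩
    have hcount : 𝒜.card ≤ SR.card := by
      have hex : ∀ A : Finset ℕ, ∃ v, A ∈ 𝒜 → v ∈ SR ∧
          ∃ (hA' : A ∈ Bad k 𝒟) (i : Fin d), v = Sum.inr (⟨A, hA'⟩, i) := by
        intro A
        by_cases hA : A ∈ 𝒜
        · obtain ⟨v, hv1, hv2⟩ := tipforce A (h𝒜bad A hA).1 (h𝒜bad A hA).2
          exact ⟨v, fun _ => ⟨hv1, hv2⟩⟩
        · exact ⟨Sum.inl ⟨NN 𝒟, NN_mem_W k 𝒟 hk⟩, fun h => absurd h hA⟩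
      choose f hf using hex
      apply Finset.card_le_card_of_injOn f (fun A hA => (hf A hA).1)
      intro A hA A' hA' hff
      rw [Finset.mem_coe] at hA hA'
      obtain ⟨hb, i, hi⟩ := (hf A hA).2
      obtain ⟨hb', i', hi'⟩ := (hf A' hA').2
      rw [hi, hi'] at hff
      have := (Sum.inr.inj hff)
      have : (⟨A, hb⟩ : {A : Finset ℕ // A ∈ Bad k 𝒟}) = ⟨A', hb'⟩ :=
        congrArg Prod.fst this
      exact congrArg Subtype.val this
    omega
  have hSRzero : SR.card = 0 := by omega
  have hSRempty : SR = ∅ := Finset.card_eq_zero.mp hSRzero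
  have hSW𝒟 : SW ∈ 𝒟 := by
    by_contra h
    have hbad : SW ∈ Bad k 𝒟 := by
      simp only [Bad, Finset.mem_filter, Finset.mem_powersetCard]
      exact ⟨⟨hSWsubW, hSWk⟩, h⟩
    obtain ⟨v, hvSR, -⟩ := tipforce SW hbad subset_rfl
    rw [hSRempty] at hvSR
    exact absurd hvSR (Finset.notMem_empty v)
  refine ⟨SW, hSW𝒟, ?_⟩
  ext v
  constructor
  · intro hv
    rcases v with w | x
    · rw [Finset.mem_image]
      exact ⟨w.1, hmemSW w hv, by rw [iota_eq k d 𝒟 hk w.2]⟩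
    · exfalso
      have : Sum.inr x ∈ SR := by
        simp only [hSR, Finset.mem_filter]
        exact ⟨hv, by simp⟩
      rw [hSRempty] at this
      exact absurd this (Finset.notMem_empty _)
  · intro hv
    rw [Finset.mem_image] at hv
    obtain ⟨n, hn, rfl⟩ := hv
    have hnW : n ∈ W k 𝒟 := hSWsubW hn
    rw [iota_eq k d 𝒟 hk hnW]
    simp only [hSW, Finset.mem_image] at hn
    obtain ⟨v', hv', hval⟩ := hn
    simp only [hSL, Finset.mem_filter] at hv'
    rcases v' with w | x
    · have : (⟨n, hnW⟩ : {x : ℕ // x ∈ W k 𝒟}) = w := Subtype.ext hval.symm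
      rw [this]
      exact hv'.1
    · simp at hv'

end DomCon

/-- Let `k` and `d` be positive integers and let `𝒟` be a nonempty finite family of
`k`-element subsets of `ℕ`. Then there exist a finite simple graph `G` and an injective
map `ι` from the union `⋃ 𝒟` into the vertex set of `G` such that a set `S` of vertices
of `G` is a minimum distance-`d`-dominating set of `G` if and only if `S` is the image
under `ι` of some member of `𝒟`. -/
theorem exists_graph_with_prescribed_min_dist_dom_sets
    (k d : ℕ) (hk : 0 < k) (hd : 0 < d)
    (𝒟 : Finset (Finset ℕ)) (h𝒟 : 𝒟.Nonempty) (hcard : ∀ D ∈ 𝒟, D.card = k) :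
    ∃ (V : Type) (_ : Fintype V) (_ : DecidableEq V) (G : SimpleGraph V) (ι : ℕ → V),
      Set.InjOn ι ↑(𝒟.sup id) ∧
      ∀ S : Finset V, IsMinDistDomSet G d S ↔ ∃ D ∈ 𝒟, S = D.image ι := by
  classical
  refine ⟨DomCon.V k d 𝒟, inferInstance, inferInstance, DomCon.G k d 𝒟,
    DomCon.iota k d 𝒟 hk, ?_, ?_⟩
  · exact (DomCon.iota_injOn k d 𝒟 hk).mono
      (Finset.coe_subset.mpr (DomCon.L_subset_W k 𝒟))
  · intro S
    have hk' : ∀ D ∈ 𝒟, (D.image (DomCon.iota k d 𝒟 hk)).card = k := fun D hD => by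
      rw [DomCon.card_image_iota k d 𝒟 hk
        ((DomCon.subset_L 𝒟 hD).trans (DomCon.L_subset_W k 𝒟)), hcard D hD]
    have hTk : ∀ T : Finset (DomCon.V k d 𝒟),
        IsDistDomSet (DomCon.G k d 𝒟) d T → k ≤ T.card := by
      intro T hT
      by_contra hlt
      push_neg at hlt
      obtain ⟨D, hD, hTD⟩ := DomCon.key k d 𝒟 hk hd hcard hT (le_of_lt hlt)
      rw [hTD, hk' D hD] at hlt
      omega
    constructor
    · rintro ⟨hdom, hmin⟩
      obtain ⟨D0, hD0⟩ := h𝒟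
      have hle : S.card ≤ k := by
        have := hmin _ (DomCon.image_dominates k d 𝒟 hk hd hcard hD0)
        rw [hk' D0 hD0] at this; exact this
      exact DomCon.key k d 𝒟 hk hd hcard hdom hle
    · rintro ⟨D, hD, rfl⟩
      refine ⟨DomCon.image_dominates k d 𝒟 hk hd hcard hD, fun T hT => ?_⟩
      rw [hk' D hD]
      exact hTk T hT
end

section
/- The wheel graph W_4 is labellable, and for every odd integer n ≥ 5 the wheel graph W_n is labellable. -/
/-- `H` is labellable: for some positive integer `k` the vertices of `H` can be
injectively labelled by `k`-element subsets of `ℕ` so that two distinct vertices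
are adjacent if and only if their labels intersect in a set of size `k - 1`. -/
def Labellable {V : Type*} (H : SimpleGraph V) : Prop :=
  ∃ k : ℕ, 0 < k ∧ ∃ ℓ : V → Finset ℕ, Function.Injective ℓ ∧
    (∀ v, (ℓ v).card = k) ∧
    ∀ u v : V, u ≠ v → (H.Adj u v ↔ (ℓ u ∩ ℓ v).card = k - 1)

/-- The wheel graph `W n` on `n` vertices: a hub vertex (`none`) joined to every
vertex of a cycle on `n - 1` vertices (the vertices `some i` for `i : Fin (n-1)`,
consecutive ones being adjacent cyclically). -/
def wheelGraph (n : ℕ) : SimpleGraph (Option (Fin (n - 1))) :=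
  SimpleGraph.fromRel (fun a b =>
    a = none ∨ b = none ∨
      ∃ i j : Fin (n - 1), a = some i ∧ b = some j ∧ (i.val + 1) % (n - 1) = j.val)

lemma key1 (t i j : ℕ) (ht : 2 ≤ t) (hi : i < 2*t) (hj : j < 2*t) (hij : i ≠ j)
    (p q : ℕ) (hp : (i+1=2*t ∧ p=0) ∨ (i+1 < 2*t ∧ p=i+1))
    (hq : (j+1=2*t ∧ q=0) ∨ (j+1 < 2*t ∧ q=j+1)) :
    (p = j ∨ q = i) ↔
      ((i/2 = j/2 ∧ p/2 ≠ q/2) ∨ (i/2 ≠ j/2 ∧ p/2 = q/2)) := by omega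

lemma key2 (t i j : ℕ) (ht : 2 ≤ t) (hi : i < 2*t) (hj : j < 2*t)
    (p q : ℕ) (hp : (i+1=2*t ∧ p=0) ∨ (i+1 < 2*t ∧ p=i+1))
    (hq : (j+1=2*t ∧ q=0) ∨ (j+1 < 2*t ∧ q=j+1))
    (hA : i/2 = j/2) (hX : p/2 = q/2) : i = j := by omega

lemma wheel_even (n t : ℕ) (ht : 2 ≤ t) (hm' : n - 1 = 2 * t) :
    Labellable (wheelGraph n) := by
  set m := n - 1 with hmdef
  have hm : m = 2 * t := hm'
  have hmpos : 0 < m := by omega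
  refine ⟨t, by omega, ?_⟩
  set A : Fin m → ℕ := fun i => i.val / 2 with hAdef
  set X : Fin m → ℕ := fun i => ((i.val + 1) % m) / 2 with hXdef
  have hi2t : ∀ i : Fin m, i.val < 2 * t := fun i => hm ▸ i.isLt
  have hp : ∀ i : Fin m, (i.val + 1 = 2*t ∧ (i.val+1) % m = 0)
      ∨ (i.val + 1 < 2*t ∧ (i.val+1) % m = i.val+1) := by
    intro i
    rcases Nat.lt_or_ge (i.val + 1) m with h | h
    · right; exact ⟨by omega, Nat.mod_eq_of_lt h⟩
    · left
      have h2 : i.val + 1 = m := by have := hi2t i; omega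
      exact ⟨by omega, by rw [h2, Nat.mod_self]⟩
  have hXeq : ∀ i : Fin m, X i = ((i.val + 1) % m) / 2 := fun i => rfl
  have hX : ∀ i : Fin m, X i < t := fun i => by
    rw [hXeq]; have := hp i; omega
  have hAeq : ∀ i : Fin m, A i = i.val / 2 := fun i => rfl
  have hA : ∀ i : Fin m, A i < t := fun i => by
    rw [hAeq]; have := hi2t i; omega
  set ℓ : Option (Fin m) → Finset ℕ := fun o =>
    o.elim (Finset.range t) (fun i => insert (t + X i) ((Finset.range t).erase (A i)))
    with hldef
  have hl1 : ℓ none = Finset.range t := rfl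
  have hl2 : ∀ i : Fin m, ℓ (some i) =
      insert (t + X i) ((Finset.range t).erase (A i)) := fun _ => rfl
  have hAX : ∀ i j : Fin m, A i = A j → X i = X j → i = j := by
    intro i j h1 h2
    rw [hAeq i, hAeq j] at h1
    rw [hXeq i, hXeq j] at h2
    exact Fin.ext (key2 t i.val j.val ht (hi2t i) (hi2t j) _ _ (hp i) (hp j) h1 h2)
  have hinj : Function.Injective ℓ := by
    intro u v huv
    match u, v with
    | none, none => rfl
    | none, some j =>
      exfalso
      have e : t + X j ∈ ℓ none := by
        rw [huv, hl2]; exact Finset.mem_insert_self _ _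
      rw [hl1, Finset.mem_range] at e
      omega
    | some i, none =>
      exfalso
      have e : t + X i ∈ ℓ none := by
        rw [← huv, hl2]; exact Finset.mem_insert_self _ _
      rw [hl1, Finset.mem_range] at e
      omega
    | some i, some j =>
      have hXi := hX i; have hXj := hX j; have hAi := hA i; have hAj := hA j
      have e1 : t + X i ∈ ℓ (some j) := by
        rw [← huv, hl2]; exact Finset.mem_insert_self _ _
      rw [hl2, Finset.mem_insert, Finset.mem_erase, Finset.mem_range] at e1
      have hX2 : X i = X j := by omega
      have hA2 : A i = A j := by
        by_contra hne
        have e2 : A j ∈ ℓ (some j) := by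
          rw [← huv, hl2, Finset.mem_insert, Finset.mem_erase, Finset.mem_range]
          exact Or.inr ⟨Ne.symm hne, hAj⟩
        rw [hl2, Finset.mem_insert, Finset.mem_erase, Finset.mem_range] at e2
        omega
      exact congrArg some (hAX i j hA2 hX2)
  refine ⟨ℓ, hinj, ?_, ?_⟩
  · intro v
    match v with
    | none => rw [hl1, Finset.card_range]
    | some i =>
      have h1 : t + X i ∉ (Finset.range t).erase (A i) := by
        simp only [Finset.mem_erase, Finset.mem_range]; omega
      have h2 : A i ∈ Finset.range t := by
        simp only [Finset.mem_range]; exact hA i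
      rw [hl2, Finset.card_insert_of_notMem h1, Finset.card_erase_of_mem h2,
        Finset.card_range]
      have := ht; omega
  · intro u v huv
    have hadj : ∀ i j : Fin m, (wheelGraph n).Adj (some i) (some j) ↔
        some i ≠ some j ∧ ((i.val + 1) % m = j.val ∨ (j.val + 1) % m = i.val) := by
      intro i j
      simp only [wheelGraph, SimpleGraph.fromRel_adj, ← hmdef]
      constructor
      · rintro ⟨hne, h | h⟩
        · rcases h with h | h | ⟨i', j', hi', hj', h⟩
          · exact absurd h (by simp)
          · exact absurd h (by simp)
          · rw [Option.some_inj] at hi' hj'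
            subst hi'; subst hj'
            exact ⟨hne, Or.inl h⟩
        · rcases h with h | h | ⟨i', j', hi', hj', h⟩
          · exact absurd h (by simp)
          · exact absurd h (by simp)
          · rw [Option.some_inj] at hi' hj'
            subst hi'; subst hj'
            exact ⟨hne, Or.inr h⟩
      · rintro ⟨hne, h | h⟩
        · exact ⟨hne, Or.inl (Or.inr (Or.inr ⟨i, j, rfl, rfl, h⟩))⟩
        · exact ⟨hne, Or.inr (Or.inr (Or.inr ⟨j, i, rfl, rfl, h⟩))⟩
    have hhub : ∀ i : Fin m, (wheelGraph n).Adj none (some i) := by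
      intro i
      simp [wheelGraph, SimpleGraph.fromRel_adj]
    have hhubcard : ∀ i : Fin m, (ℓ none ∩ ℓ (some i)).card = t - 1 := by
      intro i
      have hcap : ℓ none ∩ ℓ (some i) = (Finset.range t).erase (A i) := by
        ext z
        simp only [hl1, hl2, Finset.mem_inter, Finset.mem_insert,
          Finset.mem_erase, Finset.mem_range]
        have := hA i; have := hX i; omega
      rw [hcap, Finset.card_erase_of_mem (by simp only [Finset.mem_range]; exact hA i),
        Finset.card_range]
    match u, v with
    | none, none => exact absurd rfl huv
    | none, some i =>
      rw [hhubcard i]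
      exact ⟨fun _ => rfl, fun _ => hhub i⟩
    | some i, none =>
      rw [Finset.inter_comm, (wheelGraph n).adj_comm, hhubcard i]
      exact ⟨fun _ => rfl, fun _ => hhub i⟩
    | some i, some j =>
      have hij : i ≠ j := fun h => huv (congrArg some h)
      have hijval : i.val ≠ j.val := fun h => hij (Fin.ext h)
      rw [hadj i j]
      have harith := key1 t i.val j.val ht (hi2t i) (hi2t j) hijval _ _ (hp i) (hp j)
      rw [← hAeq i, ← hAeq j, ← hXeq i, ← hXeq j] at harith
      have hAi := hA i; have hAj := hA j; have hXi := hX i; have hXj := hX j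
      by_cases hA2 : A i = A j
      · have hX2 : X i ≠ X j := fun h => hij (hAX i j hA2 h)
        have hcap : ℓ (some i) ∩ ℓ (some j) = (Finset.range t).erase (A i) := by
          ext z
          simp only [hl2, Finset.mem_inter, Finset.mem_insert,
            Finset.mem_erase, Finset.mem_range]
          omega
        rw [hcap, Finset.card_erase_of_mem (by simp only [Finset.mem_range]; exact hAi),
          Finset.card_range]
        exact ⟨fun _ => rfl, fun _ => ⟨huv, harith.mpr (Or.inl ⟨hA2, hX2⟩)⟩⟩
      · by_cases hX2 : X i = X j
        · have hcap : ℓ (some i) ∩ ℓ (some j) =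
              insert (t + X i) (((Finset.range t).erase (A i)).erase (A j)) := by
            ext z
            simp only [hl2, Finset.mem_inter, Finset.mem_insert,
              Finset.mem_erase, Finset.mem_range]
            omega
          have hAj' : A j ∈ (Finset.range t).erase (A i) := by
            simp only [Finset.mem_erase, Finset.mem_range]
            exact ⟨Ne.symm hA2, hAj⟩
          have hni : t + X i ∉ ((Finset.range t).erase (A i)).erase (A j) := by
            simp only [Finset.mem_erase, Finset.mem_range]; omega
          rw [hcap, Finset.card_insert_of_notMem hni, Finset.card_erase_of_mem hAj',
            Finset.card_erase_of_mem (by simp only [Finset.mem_range]; exact hAi),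
            Finset.card_range]
          exact ⟨fun _ => by omega, fun _ => ⟨huv, harith.mpr (Or.inr ⟨hA2, hX2⟩)⟩⟩
        · have hcap : ℓ (some i) ∩ ℓ (some j) =
              ((Finset.range t).erase (A i)).erase (A j) := by
            ext z
            simp only [hl2, Finset.mem_inter, Finset.mem_insert,
              Finset.mem_erase, Finset.mem_range]
            omega
          have hAj' : A j ∈ (Finset.range t).erase (A i) := by
            simp only [Finset.mem_erase, Finset.mem_range]
            exact ⟨Ne.symm hA2, hAj⟩
          rw [hcap, Finset.card_erase_of_mem hAj',
            Finset.card_erase_of_mem (by simp only [Finset.mem_range]; exact hAi),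
            Finset.card_range]
          constructor
          · rintro ⟨-, h⟩
            rcases harith.mp h with ⟨h1, -⟩ | ⟨-, h2⟩
            · exact absurd h1 hA2
            · exact absurd h2 hX2
          · intro h; omega

def ℓ4 : Option (Fin (4 - 1)) → Finset ℕ := fun o => o.elim {0} (fun i => {i.val + 1})

/-- The wheel graph `W_4` is labellable, and for every odd integer `n ≥ 5`
the wheel graph `W_n` is labellable. -/
theorem wheel_labellable :
    Labellable (wheelGraph 4) ∧
      ∀ n : ℕ, 5 ≤ n → Odd n → Labellable (wheelGraph n) := by
  constructor
  · refine ⟨1, one_pos, ℓ4, ?_, ?_, ?_⟩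
    · decide
    · decide
    · have hall : ∀ u v : Option (Fin (4-1)), u ≠ v → (wheelGraph 4).Adj u v := by
        simp only [wheelGraph, SimpleGraph.fromRel_adj]
        decide
      have hcap : ∀ u v : Option (Fin (4-1)), u ≠ v → (ℓ4 u ∩ ℓ4 v).card = 1 - 1 := by
        decide
      exact fun u v huv => ⟨fun _ => hcap u v huv, fun _ => hall u v huv⟩
  · intro n hn hodd
    obtain ⟨k, hk⟩ := hodd
    exact wheel_even n k (by omega) (by omega)
end

section
/- The fan graphs F_{2,2} and F_{2,3} are labellable; for every positive integer m the fan graph F_{m,1} is labellable; and for every positive integer n the fan graph F_{1,n} is labellable. -/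
/-- The fan graph `F_{m,n}`: `m` vertices (`Sum.inl`), each joined to every vertex
of a path on `n` vertices (`Sum.inr`, consecutive ones adjacent), with the `m`
vertices pairwise nonadjacent. -/
def fanGraph (m n : ℕ) : SimpleGraph (Fin m ⊕ Fin n) :=
  SimpleGraph.fromRel (fun a b =>
    (∃ i j, a = Sum.inl i ∧ b = Sum.inr j) ∨
    (∃ i j : Fin n, a = Sum.inr i ∧ b = Sum.inr j ∧ i.val + 1 = j.val))

open Finset

lemma inter_insert_erase (N a b x y : ℕ) (hx : N ≤ x) (hy : N ≤ y) :
    (insert x ((range N).erase a)) ∩ (insert y ((range N).erase b))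
      = (((range N).erase a).erase b) ∪ (if x = y then {x} else ∅) := by
  ext z
  by_cases hxy : x = y <;> simp [hxy, Finset.mem_erase] <;> omega

lemma inter_insert_erase_range (N a x : ℕ) (hx : N ≤ x) :
    (insert x ((range N).erase a)) ∩ range N = (range N).erase a := by
  ext z; simp [Finset.mem_erase]; omega

lemma card_inter_insert_erase (N a b x y : ℕ) (ha : a < N) (hb : b < N)
    (hx : N ≤ x) (hy : N ≤ y) :
    ((insert x ((range N).erase a)) ∩ (insert y ((range N).erase b))).card
      = (N - if a = b then 1 else 2) + (if x = y then 1 else 0) := by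
  rw [inter_insert_erase N a b x y hx hy, Finset.card_union_of_disjoint]
  · congr 1
    · by_cases hab : a = b
      · subst hab
        rw [Finset.erase_idem, Finset.card_erase_of_mem (by simpa using ha), if_pos rfl,
          Finset.card_range]
      · rw [Finset.card_erase_of_mem (by simp [Finset.mem_erase]; omega),
          Finset.card_erase_of_mem (by simpa using ha), if_neg hab, Finset.card_range]
        omega
    · by_cases hxy : x = y <;> simp [hxy]
  · rw [Finset.disjoint_left]
    intro z hz hz'
    simp [Finset.mem_erase] at hz
    by_cases hxy : x = y <;> simp [hxy] at hz' <;> omega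

/-- labels for the star `F_{m,1}` with `k = m`. -/
def starLabel (m : ℕ) : Fin m ⊕ Fin 1 → Finset ℕ
  | Sum.inl i => insert (m + i.val) ((Finset.range m).erase i.val)
  | Sum.inr _ => Finset.range m

/-- labels for the fan `F_{1,n}` with `k = n + 1`. -/
def fanLabel (n : ℕ) : Fin 1 ⊕ Fin n → Finset ℕ
  | Sum.inl _ => Finset.range (n + 1)
  | Sum.inr i => insert (n + 1 + (i.val + 1) / 2) ((Finset.range (n + 1)).erase (i.val / 2))

lemma star_labellable (m : ℕ) (hm : 0 < m) : Labellable (fanGraph m 1) := by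
  refine ⟨m, hm, starLabel m, ?_, ?_, ?_⟩
  · intro u v h
    match u, v with
    | Sum.inl i, Sum.inl j =>
        have hmem : (m + i.val) ∈ starLabel m (Sum.inl i) := by simp [starLabel]
        rw [h] at hmem
        simp [starLabel, Finset.mem_erase] at hmem
        have : i.val = j.val := by omega
        exact congrArg Sum.inl (Fin.ext this)
    | Sum.inl i, Sum.inr j =>
        have hmem : (m + i.val) ∈ starLabel m (Sum.inl i) := by simp [starLabel]
        rw [h] at hmem
        simp [starLabel] at hmem
    | Sum.inr i, Sum.inl j =>
        have hmem : (m + j.val) ∈ starLabel m (Sum.inl j) := by simp [starLabel]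
        rw [← h] at hmem
        simp [starLabel] at hmem
    | Sum.inr i, Sum.inr j => exact congrArg Sum.inr (Subsingleton.elim i j)
  · intro v
    match v with
    | Sum.inl i =>
        have hi := i.isLt
        simp only [starLabel]
        rw [Finset.card_insert_of_notMem (by simp [Finset.mem_erase]),
          Finset.card_erase_of_mem (by simpa using hi), Finset.card_range]
        omega
    | Sum.inr _ => simp [starLabel]
  · intro u v huv
    match u, v with
    | Sum.inl i, Sum.inl j =>
        have hij : i.val ≠ j.val := fun h => huv (congrArg Sum.inl (Fin.ext h))
        have hi := i.isLt; have hj := j.isLt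
        simp only [starLabel]
        rw [card_inter_insert_erase m i.val j.val _ _ hi hj (by omega) (by omega),
          if_neg hij, if_neg (by omega)]
        simp [fanGraph]
        omega
    | Sum.inl i, Sum.inr j =>
        have hi := i.isLt
        have hcard : (starLabel m (Sum.inl i) ∩ starLabel m (Sum.inr j)).card = m - 1 := by
          simp only [starLabel]
          rw [inter_insert_erase_range m i.val _ (by omega),
            Finset.card_erase_of_mem (by simpa using hi), Finset.card_range]
        rw [hcard]
        simp [fanGraph]
        exact Subsingleton.elim _ _
    | Sum.inr i, Sum.inl j =>
        have hj := j.isLt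
        have hcard : (starLabel m (Sum.inr i) ∩ starLabel m (Sum.inl j)).card = m - 1 := by
          simp only [starLabel]
          rw [Finset.inter_comm, inter_insert_erase_range m j.val _ (by omega),
            Finset.card_erase_of_mem (by simpa using hj), Finset.card_range]
        rw [hcard]
        simp [fanGraph]
        exact Subsingleton.elim _ _
    | Sum.inr i, Sum.inr j =>
        exact absurd (congrArg Sum.inr (Subsingleton.elim i j)) huv

lemma fan1_labellable (n : ℕ) (hn : 0 < n) : Labellable (fanGraph 1 n) := by
  refine ⟨n + 1, Nat.succ_pos n, fanLabel n, ?_, ?_, ?_⟩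
  · intro u v h
    match u, v with
    | Sum.inl i, Sum.inl j => exact congrArg Sum.inl (Subsingleton.elim i j)
    | Sum.inl i, Sum.inr j =>
        have hmem : (n + 1 + (j.val + 1) / 2) ∈ fanLabel n (Sum.inr j) := by simp [fanLabel]
        rw [← h] at hmem
        simp [fanLabel] at hmem
        omega
    | Sum.inr i, Sum.inl j =>
        have hmem : (n + 1 + (i.val + 1) / 2) ∈ fanLabel n (Sum.inr i) := by simp [fanLabel]
        rw [h] at hmem
        simp [fanLabel] at hmem
        omega
    | Sum.inr i, Sum.inr j =>
        have hi := i.isLt; have hj := j.isLt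
        have h1 : (n + 1 + (i.val + 1) / 2) ∈ fanLabel n (Sum.inr i) := by simp [fanLabel]
        have h2 : (i.val / 2) ∉ fanLabel n (Sum.inr i) := by
          simp [fanLabel, Finset.mem_erase]; omega
        rw [h] at h1 h2
        simp [fanLabel, Finset.mem_erase] at h1 h2
        have : i.val = j.val := by omega
        exact congrArg Sum.inr (Fin.ext this)
  · intro v
    match v with
    | Sum.inl _ => simp [fanLabel]
    | Sum.inr i =>
        have hi := i.isLt
        simp only [fanLabel]
        rw [Finset.card_insert_of_notMem (by simp [Finset.mem_erase]; omega),
          Finset.card_erase_of_mem (by simp; omega), Finset.card_range]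
        omega
  · intro u v huv
    match u, v with
    | Sum.inl i, Sum.inl j =>
        exact absurd (congrArg Sum.inl (Subsingleton.elim i j)) huv
    | Sum.inl i, Sum.inr j =>
        have hj := j.isLt
        have hcard : (fanLabel n (Sum.inl i) ∩ fanLabel n (Sum.inr j)).card = n := by
          simp only [fanLabel]
          rw [Finset.inter_comm, inter_insert_erase_range (n + 1) _ _ (by omega),
            Finset.card_erase_of_mem (by simp; omega), Finset.card_range]
          omega
        rw [hcard]
        constructor
        · intro _; omega
        · intro _; simp [fanGraph]; exact Subsingleton.elim _ _
    | Sum.inr i, Sum.inl j =>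
        have hi := i.isLt
        have hcard : (fanLabel n (Sum.inr i) ∩ fanLabel n (Sum.inl j)).card = n := by
          simp only [fanLabel]
          rw [inter_insert_erase_range (n + 1) _ _ (by omega),
            Finset.card_erase_of_mem (by simp; omega), Finset.card_range]
          omega
        rw [hcard]
        constructor
        · intro _; omega
        · intro _; simp [fanGraph]; exact Subsingleton.elim _ _
    | Sum.inr i, Sum.inr j =>
        have hij : i.val ≠ j.val := fun h => huv (congrArg Sum.inr (Fin.ext h))
        have hi := i.isLt; have hj := j.isLt
        have hAdj : (fanGraph 1 n).Adj (Sum.inr i) (Sum.inr j) ↔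
            (i.val + 1 = j.val ∨ j.val + 1 = i.val) := by
          simp [fanGraph]
          exact fun _ he => hij (congrArg Fin.val he)
        rw [hAdj]
        simp only [fanLabel]
        rw [card_inter_insert_erase (n + 1) (i.val / 2) (j.val / 2) _ _
          (by omega) (by omega) (by omega) (by omega)]
        split_ifs <;> omega

/-- The fan graphs `F_{2,2}` and `F_{2,3}` are labellable; for every positive
integer `m` the fan graph `F_{m,1}` is labellable; and for every positive
integer `n` the fan graph `F_{1,n}` is labellable. -/
theorem fan_labellable :
    Labellable (fanGraph 2 2) ∧ Labellable (fanGraph 2 3) ∧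
      (∀ m : ℕ, 0 < m → Labellable (fanGraph m 1)) ∧
      (∀ n : ℕ, 0 < n → Labellable (fanGraph 1 n)) := by
  refine ⟨?_, ?_, fun m hm => star_labellable m hm, fun n hn => fan1_labellable n hn⟩
  · refine ⟨2, by norm_num, Sum.elim ![{0, 2}, {1, 3}] ![{0, 1}, {1, 2}], ?_, ?_, ?_⟩
    · decide
    · decide
    · intro u v huv
      rcases u with i | i <;> rcases v with j | j <;> fin_cases i <;> fin_cases j <;>
        simp_all [fanGraph]
  · refine ⟨2, by norm_num, Sum.elim ![{0, 2}, {1, 3}] ![{0, 1}, {1, 2}, {2, 3}], ?_, ?_, ?_⟩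
    · decide
    · decide
    · intro u v huv
      rcases u with i | i <;> rcases v with j | j <;> fin_cases i <;> fin_cases j <;>
        simp_all [fanGraph]
end

section
/- If G and H are labellable finite simple graphs, then their Cartesian (box) product G □ H is labellable. -/
private lemma aux_eq_of_inter {s t : Finset ℕ} {k : ℕ} (hs : s.card = k) (ht : t.card = k)
    (h : (s ∩ t).card = k) : s = t := by
  have h1 : s ∩ t = s := Finset.eq_of_subset_of_card_le Finset.inter_subset_left (by omega)
  have h2 : s ∩ t = t := Finset.eq_of_subset_of_card_le Finset.inter_subset_right (by omega)
  rw [← h1, h2]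

/-- If `G` and `H` are labellable finite simple graphs, then their Cartesian (box)
product `G □ H` is labellable. -/
theorem boxProd_labellable {V W : Type*} [Fintype V] [Fintype W]
    (G : SimpleGraph V) (H : SimpleGraph W)
    (hG : Labellable G) (hH : Labellable H) :
    Labellable (G.boxProd H) := by
  obtain ⟨k, hk, ℓG, hGinj, hGcard, hGadj⟩ := hG
  obtain ⟨m, hm, ℓH, hHinj, hHcard, hHadj⟩ := hH
  set f : ℕ → ℕ := fun n => 2 * n with hfdef
  set g : ℕ → ℕ := fun n => 2 * n + 1 with hgdef
  have hf : Function.Injective f := fun a b h => by simp only [hfdef] at h; omega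
  have hg : Function.Injective g := fun a b h => by simp only [hgdef] at h; omega
  have hdisj : ∀ s t : Finset ℕ, Disjoint (s.image f) (t.image g) := by
    intro s t
    refine Finset.disjoint_left.2 ?_
    intro a ha hb
    simp only [Finset.mem_image, hfdef, hgdef] at ha hb
    obtain ⟨x, -, rfl⟩ := ha
    obtain ⟨y, -, hy⟩ := hb
    omega
  set L : V × W → Finset ℕ := fun p => (ℓG p.1).image f ∪ (ℓH p.2).image g with hLdef
  have hLcard : ∀ p, (L p).card = k + m := by
    intro p
    rw [hLdef]
    rw [Finset.card_union_of_disjoint (hdisj _ _), Finset.card_image_of_injective _ hf,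
      Finset.card_image_of_injective _ hg, hGcard, hHcard]
  have hinter : ∀ p q : V × W,
      L p ∩ L q = ((ℓG p.1 ∩ ℓG q.1).image f) ∪ ((ℓH p.2 ∩ ℓH q.2).image g) := by
    intro p q
    ext a
    simp only [hLdef, Finset.mem_inter, Finset.mem_union, Finset.mem_image, hfdef, hgdef]
    constructor
    · rintro ⟨h1 | h1, h2 | h2⟩
      · obtain ⟨x, hx, rfl⟩ := h1
        obtain ⟨y, hy, hxy⟩ := h2
        have : y = x := by omega
        subst this
        exact Or.inl ⟨y, ⟨hx, hy⟩, rfl⟩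
      · obtain ⟨x, hx, rfl⟩ := h1
        obtain ⟨y, hy, hxy⟩ := h2
        omega
      · obtain ⟨x, hx, rfl⟩ := h1
        obtain ⟨y, hy, hxy⟩ := h2
        omega
      · obtain ⟨x, hx, rfl⟩ := h1
        obtain ⟨y, hy, hxy⟩ := h2
        have : y = x := by omega
        subst this
        exact Or.inr ⟨y, ⟨hx, hy⟩, rfl⟩
    · rintro (⟨x, ⟨hx1, hx2⟩, rfl⟩ | ⟨x, ⟨hx1, hx2⟩, rfl⟩)
      · exact ⟨Or.inl ⟨x, hx1, rfl⟩, Or.inl ⟨x, hx2, rfl⟩⟩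
      · exact ⟨Or.inr ⟨x, hx1, rfl⟩, Or.inr ⟨x, hx2, rfl⟩⟩
  have hcard_inter : ∀ p q : V × W,
      (L p ∩ L q).card = (ℓG p.1 ∩ ℓG q.1).card + (ℓH p.2 ∩ ℓH q.2).card := by
    intro p q
    rw [hinter, Finset.card_union_of_disjoint (hdisj _ _),
      Finset.card_image_of_injective _ hf, Finset.card_image_of_injective _ hg]
  refine ⟨k + m, by omega, L, ?_, hLcard, ?_⟩
  · intro p q h
    have h1 : (L p ∩ L q).card = k + m := by rw [h, Finset.inter_self]; exact hLcard q
    rw [hcard_inter] at h1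
    have hGle : (ℓG p.1 ∩ ℓG q.1).card ≤ k :=
      hGcard q.1 ▸ Finset.card_le_card Finset.inter_subset_right
    have hHle : (ℓH p.2 ∩ ℓH q.2).card ≤ m :=
      hHcard q.2 ▸ Finset.card_le_card Finset.inter_subset_right
    have e1 : p.1 = q.1 :=
      hGinj (aux_eq_of_inter (hGcard p.1) (hGcard q.1) (by omega))
    have e2 : p.2 = q.2 :=
      hHinj (aux_eq_of_inter (hHcard p.2) (hHcard q.2) (by omega))
    exact Prod.ext e1 e2
  · intro u v huv
    rw [SimpleGraph.boxProd_adj, hcard_inter]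
    have hGle : (ℓG u.1 ∩ ℓG v.1).card ≤ k :=
      hGcard v.1 ▸ Finset.card_le_card Finset.inter_subset_right
    have hHle : (ℓH u.2 ∩ ℓH v.2).card ≤ m :=
      hHcard v.2 ▸ Finset.card_le_card Finset.inter_subset_right
    constructor
    · rintro (⟨hadj, heq⟩ | ⟨hadj, heq⟩)
      · have h1 : (ℓG u.1 ∩ ℓG v.1).card = k - 1 :=
          (hGadj u.1 v.1 (G.ne_of_adj hadj)).1 hadj
        rw [h1, heq, Finset.inter_self, hHcard]
        omega
      · have h1 : (ℓH u.2 ∩ ℓH v.2).card = m - 1 :=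
          (hHadj u.2 v.2 (H.ne_of_adj hadj)).1 hadj
        rw [h1, heq, Finset.inter_self, hGcard]
        omega
    · intro hsum
      by_cases h1 : u.1 = v.1
      · have h2 : u.2 ≠ v.2 := fun h2 => huv (Prod.ext h1 h2)
        refine Or.inr ⟨(hHadj u.2 v.2 h2).2 ?_, h1⟩
        rw [h1, Finset.inter_self, hGcard] at hsum
        omega
      · have hGne : (ℓG u.1 ∩ ℓG v.1).card ≠ k := fun hc =>
          h1 (hGinj (aux_eq_of_inter (hGcard u.1) (hGcard v.1) hc))
        have hHeq : (ℓH u.2 ∩ ℓH v.2).card = m := by omega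
        have e2 : u.2 = v.2 := hHinj (aux_eq_of_inter (hHcard u.2) (hHcard v.2) hHeq)
        exact Or.inl ⟨(hGadj u.1 v.1 h1).2 (by omega), e2⟩
end

section
/- For all integers m ≥ 2 and n ≥ 2 with (m,n) ≠ (2,2) and (m,n) ≠ (2,3), the fan graph F_{m,n} is not labellable. -/
open Finset

private lemma dich {k : ℕ} {X Y W : Finset ℕ} (hk : 2 ≤ k)
    (hW : W.card = k)
    (hXY : (X ∩ Y).card = k - 1) (hWX : (W ∩ X).card = k - 1)
    (hWY : (W ∩ Y).card = k - 1) :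
    X ∩ Y ⊆ W ∨ W ⊆ X ∪ Y := by
  have h1 := card_inter_add_card_union (W ∩ X) (W ∩ Y)
  have e1 : W ∩ X ∩ (W ∩ Y) = W ∩ (X ∩ Y) := by ext x; simp; tauto
  have e2 : W ∩ X ∪ W ∩ Y = W ∩ (X ∪ Y) := (inter_union_distrib_left W X Y).symm
  rw [e1, e2, hWX, hWY] at h1
  have h2 : (W ∩ (X ∪ Y)).card ≤ k := hW ▸ card_le_card inter_subset_left
  have h3 : (W ∩ (X ∩ Y)).card ≤ k - 1 := hXY ▸ card_le_card inter_subset_right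
  rcases (by omega : (W ∩ (X ∩ Y)).card = k - 1 ∨ (W ∩ (X ∪ Y)).card = k) with h | h
  · left
    have hsub : W ∩ (X ∩ Y) ⊆ X ∩ Y := inter_subset_right
    have he := eq_of_subset_of_card_le hsub (by omega)
    rw [← he]; exact inter_subset_left
  · right
    have hsub : W ∩ (X ∪ Y) ⊆ W := inter_subset_left
    have he := eq_of_subset_of_card_le hsub (by omega)
    rw [← he]; exact inter_subset_right

private lemma big_inter {k : ℕ} {U W1 W2 : Finset ℕ} (h1 : W1 ⊆ U) (h2 : W2 ⊆ U)
    (hU : U.card ≤ k + 1) (c1 : W1.card = k) (c2 : W2.card = k) :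
    k - 1 ≤ (W1 ∩ W2).card := by
  have h := card_inter_add_card_union W1 W2
  have h3 : (W1 ∪ W2).card ≤ k + 1 := le_trans (card_le_card (union_subset h1 h2)) hU
  omega

private lemma no3 {k : ℕ} (hk : 2 ≤ k) {X Y W1 W2 W3 : Finset ℕ}
    (cX : X.card = k) (cY : Y.card = k)
    (c1 : W1.card = k) (c2 : W2.card = k) (c3 : W3.card = k)
    (hXY : (X ∩ Y).card = k - 1)
    (h1X : (W1 ∩ X).card = k - 1) (h1Y : (W1 ∩ Y).card = k - 1)
    (h2X : (W2 ∩ X).card = k - 1) (h2Y : (W2 ∩ Y).card = k - 1)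
    (h3X : (W3 ∩ X).card = k - 1) (h3Y : (W3 ∩ Y).card = k - 1)
    (n12 : (W1 ∩ W2).card < k - 1) (n13 : (W1 ∩ W3).card < k - 1)
    (n23 : (W2 ∩ W3).card < k - 1) : False := by
  have hU : (X ∪ Y).card ≤ k + 1 := by
    have := card_inter_add_card_union X Y; omega
  have AA : ∀ {U V : Finset ℕ}, X ∩ Y ⊆ U → X ∩ Y ⊆ V → (U ∩ V).card < k - 1 → False := by
    intro U V hU' hV' hn
    have : X ∩ Y ⊆ U ∩ V := subset_inter hU' hV'
    have := card_le_card this; omega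
  have BB : ∀ {U V : Finset ℕ}, U.card = k → V.card = k → U ⊆ X ∪ Y → V ⊆ X ∪ Y →
      (U ∩ V).card < k - 1 → False := by
    intro U V cU cV hU' hV' hn
    have := big_inter hU' hV' hU cU cV; omega
  rcases dich hk c1 hXY h1X h1Y with a1 | b1 <;>
    rcases dich hk c2 hXY h2X h2Y with a2 | b2 <;>
      rcases dich hk c3 hXY h3X h3Y with a3 | b3
  · exact AA a1 a2 n12
  · exact AA a1 a2 n12
  · exact AA a1 a3 n13
  · exact BB c2 c3 b2 b3 n23
  · exact AA a2 a3 n23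
  · exact BB c1 c3 b1 b3 n13
  · exact BB c1 c2 b1 b2 n12
  · exact BB c1 c2 b1 b2 n12

private lemma adj_of_big {V : Type*} {H : SimpleGraph V} {k : ℕ} {ℓ : V → Finset ℕ}
    (hinj : Function.Injective ℓ) (hcard : ∀ v, (ℓ v).card = k)
    (hadj : ∀ u v : V, u ≠ v → (H.Adj u v ↔ (ℓ u ∩ ℓ v).card = k - 1))
    {u v : V} (huv : u ≠ v) (hbig : k - 1 ≤ (ℓ u ∩ ℓ v).card) : H.Adj u v := by
  have h1 : (ℓ u ∩ ℓ v).card ≤ k := (hcard u) ▸ card_le_card inter_subset_left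
  rcases (by omega : (ℓ u ∩ ℓ v).card = k - 1 ∨ (ℓ u ∩ ℓ v).card = k) with h | h
  · exact (hadj u v huv).mpr h
  · exfalso; apply huv; apply hinj
    have hsub : ℓ u ∩ ℓ v ⊆ ℓ u := inter_subset_left
    have e1 := eq_of_subset_of_card_le hsub (by rw [hcard u, h])
    have hsub2 : ℓ u ∩ ℓ v ⊆ ℓ v := inter_subset_right
    have e2 := eq_of_subset_of_card_le hsub2 (by rw [hcard v, h])
    exact e1.symm.trans e2

private lemma small_of_nonadj {V : Type*} {H : SimpleGraph V} {k : ℕ} {ℓ : V → Finset ℕ}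
    (hinj : Function.Injective ℓ) (hcard : ∀ v, (ℓ v).card = k)
    (hadj : ∀ u v : V, u ≠ v → (H.Adj u v ↔ (ℓ u ∩ ℓ v).card = k - 1))
    {u v : V} (huv : u ≠ v) (hna : ¬ H.Adj u v) : (ℓ u ∩ ℓ v).card < k - 1 := by
  by_contra h
  push_neg at h
  exact hna (adj_of_big hinj hcard hadj huv h)

set_option maxHeartbeats 2000000 in
private lemma chain {k : ℕ} (hk : 2 ≤ k) {A B P1 P2 P3 P4 : Finset ℕ}
    (cA : A.card = k) (cB : B.card = k) (c1 : P1.card = k) (c2 : P2.card = k)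
    (c3 : P3.card = k) (c4 : P4.card = k)
    (hA1 : (A ∩ P1).card = k - 1) (hA2 : (A ∩ P2).card = k - 1)
    (hA3 : (A ∩ P3).card = k - 1) (hA4 : (A ∩ P4).card = k - 1)
    (hB1 : (B ∩ P1).card = k - 1) (hB2 : (B ∩ P2).card = k - 1)
    (hB3 : (B ∩ P3).card = k - 1) (hB4 : (B ∩ P4).card = k - 1)
    (h12 : (P1 ∩ P2).card = k - 1) (h23 : (P2 ∩ P3).card = k - 1)
    (h34 : (P3 ∩ P4).card = k - 1)
    (n13 : (P1 ∩ P3).card < k - 1) (n14 : (P1 ∩ P4).card < k - 1)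
    (n24 : (P2 ∩ P4).card < k - 1) (nAB : (A ∩ B).card < k - 1)
    (tA : P1 ∩ P2 ⊆ A) (tB : B ⊆ P1 ∪ P2) : False := by
  -- Step 1 : A ∩ P1 = P1 ∩ P2 = A ∩ P2
  have s1sub : P1 ∩ P2 ⊆ A ∩ P1 := subset_inter tA inter_subset_left
  have step1a : P1 ∩ P2 = A ∩ P1 := eq_of_subset_of_card_le s1sub (by
    clear * - hA1 h12; omega)
  have s2sub : P1 ∩ P2 ⊆ A ∩ P2 := subset_inter tA inter_subset_right
  have step1b : P1 ∩ P2 = A ∩ P2 := eq_of_subset_of_card_le s2sub (by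
    clear * - hA2 h12; omega)
  -- Step 2 : dichotomy for P3 with respect to the edge (A, P2)
  rcases dich hk c3 hA2 (by rw [inter_comm]; exact hA3) (by rw [inter_comm]; exact h23)
    with hS3 | hP3
  · -- P1 ∩ P2 ⊆ P3 forces P1, P3 too close
    have hS3' : P1 ∩ P2 ⊆ P3 := by rw [step1b]; exact hS3
    have := card_le_card (subset_inter inter_subset_left hS3')
    clear * - this h12 n13 hk; omega
  -- Step 3 : (P3 ∩ (P1 ∩ P2)).card = k - 2
  have cc3A : (P3 ∩ A).card = k - 1 := by rw [inter_comm]; exact hA3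
  have cc3P2 : (P3 ∩ P2).card = k - 1 := by rw [inter_comm]; exact h23
  have i3 := card_inter_add_card_union (P3 ∩ A) (P3 ∩ P2)
  have e1 : P3 ∩ A ∩ (P3 ∩ P2) = P3 ∩ (A ∩ P2) := by ext x; simp; tauto
  have e2 : P3 ∩ A ∪ P3 ∩ P2 = P3 ∩ (A ∪ P2) := (inter_union_distrib_left P3 A P2).symm
  have e3 : P3 ∩ (A ∪ P2) = P3 := inter_eq_left.mpr hP3
  rw [e1, e2, e3] at i3
  have hS3card' : (P3 ∩ (A ∩ P2)).card = k - 2 := by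
    clear * - i3 c3 cc3A cc3P2 hk; omega
  have hS3card : (P3 ∩ (P1 ∩ P2)).card = k - 2 := by rw [step1b]; exact hS3card'
  -- Step 4 : (B ∩ (P1 ∩ P2)).card = k - 2
  have i4 := card_inter_add_card_union (B ∩ P1) (B ∩ P2)
  have e4 : B ∩ P1 ∩ (B ∩ P2) = B ∩ (P1 ∩ P2) := by ext x; simp; tauto
  have e5 : B ∩ P1 ∪ B ∩ P2 = B ∩ (P1 ∪ P2) := (inter_union_distrib_left B P1 P2).symm
  have e6 : B ∩ (P1 ∪ P2) = B := inter_eq_left.mpr tB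
  rw [e4, e5, e6] at i4
  have hBScard : (B ∩ (P1 ∩ P2)).card = k - 2 := by
    clear * - i4 cB hB1 hB2 hk; omega
  -- Step 5 : P3 ∩ B ⊆ P2, hence P3 ∩ (P1 ∩ P2) = B ∩ (P1 ∩ P2)
  have h5 : P3 ∩ B ⊆ P2 := by
    intro x hx
    rcases mem_inter.mp hx with ⟨h3, hb⟩
    rcases mem_union.mp (hP3 h3) with hA' | h2
    · rcases mem_union.mp (tB hb) with h1' | h2'
      · have hx' : x ∈ A ∩ P1 := mem_inter.mpr ⟨hA', h1'⟩
        rw [← step1a] at hx'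
        exact (mem_inter.mp hx').2
      · exact h2'
    · exact h2
  have hsd : (P2 \ (P1 ∩ P2)).card = 1 := by
    have h := card_inter_add_card_sdiff P2 (P1 ∩ P2)
    have e : P2 ∩ (P1 ∩ P2) = P1 ∩ P2 := inter_eq_right.mpr inter_subset_right
    rw [e] at h; clear * - h c2 h12 hk; omega
  have hdec : P3 ∩ B ⊆ (P3 ∩ B ∩ (P1 ∩ P2)) ∪ (P2 \ (P1 ∩ P2)) := by
    intro x hx
    by_cases hxS : x ∈ P1 ∩ P2
    · exact mem_union_left _ (mem_inter.mpr ⟨hx, hxS⟩)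
    · exact mem_union_right _ (mem_sdiff.mpr ⟨h5 hx, hxS⟩)
  have hcardP3B : (P3 ∩ B).card = k - 1 := by rw [inter_comm]; exact hB3
  have hlow : k - 2 ≤ (P3 ∩ B ∩ (P1 ∩ P2)).card := by
    have hd1 := card_le_card hdec
    have hd2 := card_union_le (P3 ∩ B ∩ (P1 ∩ P2)) (P2 \ (P1 ∩ P2))
    clear * - hd1 hd2 hcardP3B hsd hk; omega
  have hsub1 : P3 ∩ B ∩ (P1 ∩ P2) ⊆ P3 ∩ (P1 ∩ P2) := by
    intro x hx; simp only [mem_inter] at hx ⊢; tauto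
  have hsub2 : P3 ∩ B ∩ (P1 ∩ P2) ⊆ B ∩ (P1 ∩ P2) := by
    intro x hx; simp only [mem_inter] at hx ⊢; tauto
  have heq1 : P3 ∩ B ∩ (P1 ∩ P2) = P3 ∩ (P1 ∩ P2) :=
    eq_of_subset_of_card_le hsub1 (by clear * - hlow hS3card; omega)
  have heq2 : P3 ∩ B ∩ (P1 ∩ P2) = B ∩ (P1 ∩ P2) :=
    eq_of_subset_of_card_le hsub2 (by clear * - hlow hBScard; omega)
  have hBSP3 : B ∩ (P1 ∩ P2) ⊆ P3 := by
    rw [← heq2]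
    exact Subset.trans inter_subset_left inter_subset_left
  have hBSA : B ∩ (P1 ∩ P2) ⊆ A := fun x hx => tA (mem_inter.mp hx).2
  -- A ∩ B = B ∩ (P1 ∩ P2)
  have hABsub : B ∩ (P1 ∩ P2) ⊆ A ∩ B :=
    fun x hx => mem_inter.mpr ⟨hBSA hx, (mem_inter.mp hx).1⟩
  have hABeq : B ∩ (P1 ∩ P2) = A ∩ B := eq_of_subset_of_card_le hABsub (by
    clear * - nAB hBScard hk; omega)
  have hBAP3 : B ∩ (A ∩ P3) = B ∩ (P1 ∩ P2) := by
    apply Subset.antisymm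
    · intro x hx
      rcases mem_inter.mp hx with ⟨hb, hx'⟩
      have : x ∈ A ∩ B := mem_inter.mpr ⟨(mem_inter.mp hx').1, hb⟩
      rw [← hABeq] at this; exact this
    · intro x hx
      exact mem_inter.mpr ⟨(mem_inter.mp hx).1, mem_inter.mpr ⟨hBSA hx, hBSP3 hx⟩⟩
  -- P2 ∩ (A ∩ P3) = P3 ∩ (P1 ∩ P2)
  have key : ∀ x : ℕ, x ∈ P1 ∩ P2 ↔ x ∈ A ∩ P2 := fun x => by rw [step1b]
  have hP2AP3 : P2 ∩ (A ∩ P3) = P3 ∩ (P1 ∩ P2) := by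
    ext x
    have hkx := key x
    simp only [mem_inter] at hkx ⊢
    tauto
  -- Step 6 : dichotomy for P4 with respect to the edge (A, P3)
  rcases dich hk c4 hA3 (by rw [inter_comm]; exact hA4) (by rw [inter_comm]; exact h34)
    with hS4 | hP4
  · -- type A : A ∩ P3 ⊆ P4
    have he6 : P4 ∩ B ∩ (A ∩ P3) = B ∩ (A ∩ P3) := by
      apply Subset.antisymm
      · intro x hx
        rcases mem_inter.mp hx with ⟨hx1, hx2⟩
        exact mem_inter.mpr ⟨(mem_inter.mp hx1).2, hx2⟩
      · intro x hx
        rcases mem_inter.mp hx with ⟨hb, hx'⟩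
        exact mem_inter.mpr ⟨mem_inter.mpr ⟨hS4 hx', hb⟩, hx'⟩
    have i6 := card_inter_add_card_sdiff (P4 ∩ B) (A ∩ P3)
    rw [he6, hBAP3] at i6
    have cP4B : (P4 ∩ B).card = k - 1 := by rw [inter_comm]; exact hB4
    have hone : ((P4 ∩ B) \ (A ∩ P3)).card = 1 := by
      clear * - i6 cP4B hBScard hk; omega
    obtain ⟨w, hw⟩ := card_eq_one.mp hone
    have hwmem : w ∈ (P4 ∩ B) \ (A ∩ P3) := hw ▸ mem_singleton_self w
    rcases mem_sdiff.mp hwmem with ⟨hw4b, hwnA3⟩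
    rcases mem_inter.mp hw4b with ⟨hw4, hwB⟩
    have hwS : w ∉ B ∩ (P1 ∩ P2) :=
      fun hwS => hwnA3 (mem_inter.mpr ⟨hBSA hwS, hBSP3 hwS⟩)
    rcases mem_union.mp (tB hwB) with hw1 | hw2
    · have hins : insert w (B ∩ (P1 ∩ P2)) ⊆ P1 ∩ P4 := by
        intro x hx
        rcases mem_insert.mp hx with rfl | hx'
        · exact mem_inter.mpr ⟨hw1, hw4⟩
        · exact mem_inter.mpr ⟨(mem_inter.mp (mem_inter.mp hx').2).1,
            hS4 (mem_inter.mpr ⟨hBSA hx', hBSP3 hx'⟩)⟩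
      have hc := card_le_card hins
      rw [card_insert_of_notMem hwS] at hc
      clear * - hc hBScard n14 hk; omega
    · have hins : insert w (B ∩ (P1 ∩ P2)) ⊆ P2 ∩ P4 := by
        intro x hx
        rcases mem_insert.mp hx with rfl | hx'
        · exact mem_inter.mpr ⟨hw2, hw4⟩
        · exact mem_inter.mpr ⟨(mem_inter.mp (mem_inter.mp hx').2).2,
            hS4 (mem_inter.mpr ⟨hBSA hx', hBSP3 hx'⟩)⟩
      have hc := card_le_card hins
      rw [card_insert_of_notMem hwS] at hc
      clear * - hc hBScard n24 hk; omega
  · -- type B : P4 ⊆ A ∪ P3 ; show P2 ⊆ A ∪ P3 too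
    have i5 := card_inter_add_card_union (P2 ∩ A) (P2 ∩ P3)
    have e1' : P2 ∩ A ∩ (P2 ∩ P3) = P2 ∩ (A ∩ P3) := by ext x; simp; tauto
    have e2' : P2 ∩ A ∪ P2 ∩ P3 = P2 ∩ (A ∪ P3) := (inter_union_distrib_left P2 A P3).symm
    rw [e1', e2', hP2AP3] at i5
    have cP2A : (P2 ∩ A).card = k - 1 := by rw [inter_comm]; exact hA2
    have hc : (P2 ∩ (A ∪ P3)).card = k := by
      clear * - i5 hS3card cP2A h23 c2 hk; omega
    have hsub : P2 ∩ (A ∪ P3) ⊆ P2 := inter_subset_left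
    have he := eq_of_subset_of_card_le hsub (by clear * - c2 hc; omega)
    have hP2sub : P2 ⊆ A ∪ P3 := by rw [← he]; exact inter_subset_right
    have hUcard : (A ∪ P3).card ≤ k + 1 := by
      have h7 := card_inter_add_card_union A P3
      clear * - h7 cA c3 hA3; omega
    have := big_inter hP2sub hP4 hUcard c2 c4
    clear * - this n24 hk; omega

private lemma fan_adj_hub {m n : ℕ} (i : Fin m) (j : Fin n) :
    (fanGraph m n).Adj (Sum.inl i) (Sum.inr j) := by
  rw [fanGraph, SimpleGraph.fromRel_adj]
  exact ⟨fun h => Sum.inl_ne_inr h, Or.inl (Or.inl ⟨i, j, rfl, rfl⟩)⟩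

private lemma fan_nonadj_hub {m n : ℕ} (i i' : Fin m) :
    ¬ (fanGraph m n).Adj (Sum.inl i) (Sum.inl i') := by
  rw [fanGraph, SimpleGraph.fromRel_adj]
  rintro ⟨-, (⟨a, b, ha, hb⟩ | ⟨a, b, ha, hb, hc⟩) | (⟨a, b, ha, hb⟩ | ⟨a, b, ha, hb, hc⟩)⟩ <;>
    first
    | exact Sum.inl_ne_inr ha
    | exact Sum.inl_ne_inr hb

private lemma fan_adj_path {m n : ℕ} (i j : Fin n) (h : i.val + 1 = j.val) :
    (fanGraph m n).Adj (Sum.inr i) (Sum.inr j) := by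
  rw [fanGraph, SimpleGraph.fromRel_adj]
  refine ⟨fun he => ?_, Or.inl (Or.inr ⟨i, j, rfl, rfl, h⟩)⟩
  obtain rfl := Sum.inr_injective he
  omega

private lemma fan_nonadj_path {m n : ℕ} (i j : Fin n)
    (h1 : i.val + 1 ≠ j.val) (h2 : j.val + 1 ≠ i.val) :
    ¬ (fanGraph m n).Adj (Sum.inr i) (Sum.inr j) := by
  rw [fanGraph, SimpleGraph.fromRel_adj]
  rintro ⟨-, (⟨a, b, ha, hb⟩ | ⟨a, b, ha, hb, hc⟩) | (⟨a, b, ha, hb⟩ | ⟨a, b, ha, hb, hc⟩)⟩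
  · exact nomatch ha
  · obtain rfl := Sum.inr_injective ha
    obtain rfl := Sum.inr_injective hb
    exact h1 hc
  · exact nomatch ha
  · obtain rfl := Sum.inr_injective ha
    obtain rfl := Sum.inr_injective hb
    exact h2 hc

/-- For all integers `m ≥ 2` and `n ≥ 2` with `(m,n) ≠ (2,2)` and `(m,n) ≠ (2,3)`,
the fan graph `F_{m,n}` is not labellable. -/
theorem fan_not_labellable (m n : ℕ) (hm : 2 ≤ m) (hn : 2 ≤ n)
    (h22 : (m, n) ≠ (2, 2)) (h23 : (m, n) ≠ (2, 3)) :
    ¬ Labellable (fanGraph m n) := by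
  rintro ⟨k, hk0, ℓ, hinj, hcard, hadj⟩
  have nsum : ∀ (i : Fin m) (j : Fin n), (Sum.inl i : Fin m ⊕ Fin n) ≠ Sum.inr j :=
    fun i j h => nomatch h
  have nl : ∀ i i' : Fin m, i.val ≠ i'.val → (Sum.inl i : Fin m ⊕ Fin n) ≠ Sum.inl i' :=
    fun i i' h he => h (congrArg Fin.val (Sum.inl_injective he))
  have nr : ∀ j j' : Fin n, j.val ≠ j'.val → (Sum.inr j : Fin m ⊕ Fin n) ≠ Sum.inr j' :=
    fun j j' h he => h (congrArg Fin.val (Sum.inr_injective he))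
  have hubP : ∀ (i : Fin m) (j : Fin n),
      (ℓ (Sum.inl i) ∩ ℓ (Sum.inr j)).card = k - 1 :=
    fun i j => (hadj _ _ (nsum i j)).mp (fan_adj_hub i j)
  have pathP : ∀ j j' : Fin n, j.val + 1 = j'.val →
      (ℓ (Sum.inr j) ∩ ℓ (Sum.inr j')).card = k - 1 :=
    fun j j' h => (hadj _ _ (nr j j' (by omega))).mp (fan_adj_path j j' h)
  have nonP : ∀ j j' : Fin n, j.val + 1 ≠ j'.val → j'.val + 1 ≠ j.val → j.val ≠ j'.val →
      (ℓ (Sum.inr j) ∩ ℓ (Sum.inr j')).card < k - 1 :=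
    fun j j' h1 h2 h3 =>
      small_of_nonadj hinj hcard hadj (nr j j' h3) (fan_nonadj_path j j' h1 h2)
  have nonH : ∀ i i' : Fin m, i.val ≠ i'.val →
      (ℓ (Sum.inl i) ∩ ℓ (Sum.inl i')).card < k - 1 :=
    fun i i' h => small_of_nonadj hinj hcard hadj (nl i i' h) (fan_nonadj_hub i i')
  obtain ⟨a0, ha0⟩ : ∃ q : Fin m, q.val = 0 := ⟨⟨0, by omega⟩, rfl⟩
  obtain ⟨a1, ha1⟩ : ∃ q : Fin m, q.val = 1 := ⟨⟨1, by omega⟩, rfl⟩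
  obtain ⟨q0, hq0⟩ : ∃ q : Fin n, q.val = 0 := ⟨⟨0, by omega⟩, rfl⟩
  obtain ⟨q1, hq1⟩ : ∃ q : Fin n, q.val = 1 := ⟨⟨1, by omega⟩, rfl⟩
  have hk2 : 2 ≤ k := by
    have h0 := nonH a0 a1 (by omega)
    clear * - h0; omega
  by_cases hm3 : 3 ≤ m
  · -- m ≥ 3 : the path edge (0,1) has three pairwise nonadjacent common neighbours
    obtain ⟨a2, ha2⟩ : ∃ q : Fin m, q.val = 2 := ⟨⟨2, by omega⟩, rfl⟩
    exact no3 hk2 (hcard (Sum.inr q0)) (hcard (Sum.inr q1))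
      (hcard (Sum.inl a0)) (hcard (Sum.inl a1)) (hcard (Sum.inl a2))
      (pathP q0 q1 (by omega))
      (hubP a0 q0) (hubP a0 q1) (hubP a1 q0) (hubP a1 q1) (hubP a2 q0) (hubP a2 q1)
      (nonH a0 a1 (by omega)) (nonH a0 a2 (by omega)) (nonH a1 a2 (by omega))
  · -- m = 2 : then n ≥ 4
    have hn4 : 4 ≤ n := by
      have g2 : ¬(m = 2 ∧ n = 2) := fun ⟨x, y⟩ => h22 (by rw [x, y])
      have g3 : ¬(m = 2 ∧ n = 3) := fun ⟨x, y⟩ => h23 (by rw [x, y])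
      clear * - hm hn hm3 g2 g3; omega
    obtain ⟨q2, hq2⟩ : ∃ q : Fin n, q.val = 2 := ⟨⟨2, by omega⟩, rfl⟩
    obtain ⟨q3, hq3⟩ : ∃ q : Fin n, q.val = 3 := ⟨⟨3, by omega⟩, rfl⟩
    have dA := dich hk2 (hcard (Sum.inl a0)) (pathP q0 q1 (by omega))
      (hubP a0 q0) (hubP a0 q1)
    have dB := dich hk2 (hcard (Sum.inl a1)) (pathP q0 q1 (by omega))
      (hubP a1 q0) (hubP a1 q1)
    rcases dA with tA | tA'
    · rcases dB with tB | tB'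
      · -- both hubs of type A : they would be adjacent
        have hle := card_le_card (subset_inter tA tB)
        have h12' := pathP q0 q1 (by omega)
        have hAB := nonH a0 a1 (by omega)
        clear * - hle h12' hAB; omega
      · -- first hub type A, second type B
        exact chain hk2 (hcard _) (hcard _) (hcard _) (hcard _) (hcard _) (hcard _)
          (hubP a0 q0) (hubP a0 q1) (hubP a0 q2) (hubP a0 q3)
          (hubP a1 q0) (hubP a1 q1) (hubP a1 q2) (hubP a1 q3)
          (pathP q0 q1 (by omega)) (pathP q1 q2 (by omega)) (pathP q2 q3 (by omega))
          (nonP q0 q2 (by omega) (by omega) (by omega))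
          (nonP q0 q3 (by omega) (by omega) (by omega))
          (nonP q1 q3 (by omega) (by omega) (by omega))
          (nonH a0 a1 (by omega))
          tA tB'
    · rcases dB with tB | tB'
      · -- second hub type A, first type B : swap the roles of the hubs
        exact chain hk2 (hcard _) (hcard _) (hcard _) (hcard _) (hcard _) (hcard _)
          (hubP a1 q0) (hubP a1 q1) (hubP a1 q2) (hubP a1 q3)
          (hubP a0 q0) (hubP a0 q1) (hubP a0 q2) (hubP a0 q3)
          (pathP q0 q1 (by omega)) (pathP q1 q2 (by omega)) (pathP q2 q3 (by omega))
          (nonP q0 q2 (by omega) (by omega) (by omega))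
          (nonP q0 q3 (by omega) (by omega) (by omega))
          (nonP q1 q3 (by omega) (by omega) (by omega))
          (nonH a1 a0 (by omega))
          tB tA'
      · -- both hubs of type B : they would be adjacent
        have h7 := card_inter_add_card_union (ℓ (Sum.inr q0)) (ℓ (Sum.inr q1))
        have h12' := pathP q0 q1 (by omega)
        have c1 := hcard (Sum.inr q0)
        have c2 := hcard (Sum.inr q1)
        have hU : (ℓ (Sum.inr q0) ∪ ℓ (Sum.inr q1)).card ≤ k + 1 := by
          clear * - h7 h12' c1 c2; omega
        have hbig := big_inter tA' tB' hU (hcard _) (hcard _)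
        have hAB := nonH a0 a1 (by omega)
        clear * - hbig hAB; omega
end

section
/- If a, b, c are vertices of H with a adjacent to b, b adjacent to c, a ≠ c, and a not adjacent to c, then |ℓ(a) ∩ ℓ(c)| = k − 2, ℓ(a) ∩ ℓ(c) ⊆ ℓ(b), and ℓ(b) ⊆ ℓ(a) ∪ ℓ(c). -/
/-- Let `H` be a simple graph, `k` a positive integer, and `ℓ` an injective
function assigning to each vertex of `H` a `k`-element subset of `ℕ`, such that
two distinct vertices `u` and `v` are adjacent in `H` if and only if
`|ℓ(u) ∩ ℓ(v)| = k - 1`. If `a, b, c` are vertices of `H` with `a` adjacent to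
`b`, `b` adjacent to `c`, `a ≠ c`, and `a` not adjacent to `c`, then
`|ℓ(a) ∩ ℓ(c)| = k - 2`, `ℓ(a) ∩ ℓ(c) ⊆ ℓ(b)`, and `ℓ(b) ⊆ ℓ(a) ∪ ℓ(c)`. -/
theorem path_labelling {V : Type*} (H : SimpleGraph V) (k : ℕ) (hk : 0 < k)
    (ℓ : V → Finset ℕ) (hinj : Function.Injective ℓ)
    (hcard : ∀ v, (ℓ v).card = k)
    (hadj : ∀ u v : V, u ≠ v → (H.Adj u v ↔ (ℓ u ∩ ℓ v).card = k - 1))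
    (a b c : V) (hab : H.Adj a b) (hbc : H.Adj b c)
    (hac : a ≠ c) (hnac : ¬ H.Adj a c) :
    (ℓ a ∩ ℓ c).card = k - 2 ∧ ℓ a ∩ ℓ c ⊆ ℓ b ∧ ℓ b ⊆ ℓ a ∪ ℓ c := by
  have h1 : (ℓ a ∩ ℓ b).card = k - 1 := (hadj a b hab.ne).mp hab
  have h2 : (ℓ b ∩ ℓ c).card = k - 1 := (hadj b c hbc.ne).mp hbc
  have hne : ℓ a ≠ ℓ c := fun h => hac (hinj h)
  have hACle : (ℓ a ∩ ℓ c).card ≤ k := by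
    calc (ℓ a ∩ ℓ c).card ≤ (ℓ a).card := Finset.card_le_card Finset.inter_subset_left
      _ = k := hcard a
  have hACltk : (ℓ a ∩ ℓ c).card ≠ k := by
    intro h
    have heq : ℓ a ∩ ℓ c = ℓ a :=
      Finset.eq_of_subset_of_card_le Finset.inter_subset_left (by rw [h, hcard a])
    have hsub : ℓ a ⊆ ℓ c := by
      intro x hx
      have : x ∈ ℓ a ∩ ℓ c := by rw [heq]; exact hx
      exact (Finset.mem_inter.mp this).2
    exact hne (Finset.eq_of_subset_of_card_le hsub (by rw [hcard a, hcard c]))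
  have hACne : (ℓ a ∩ ℓ c).card ≠ k - 1 := fun h => hnac ((hadj a c hac).mpr h)
  have hsubB : (ℓ a ∩ ℓ b) ∪ (ℓ b ∩ ℓ c) ⊆ ℓ b := by
    intro x hx
    rcases Finset.mem_union.mp hx with h | h
    · exact (Finset.mem_inter.mp h).2
    · exact (Finset.mem_inter.mp h).1
  have hUle : ((ℓ a ∩ ℓ b) ∪ (ℓ b ∩ ℓ c)).card ≤ k := by
    calc ((ℓ a ∩ ℓ b) ∪ (ℓ b ∩ ℓ c)).card ≤ (ℓ b).card := Finset.card_le_card hsubB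
      _ = k := hcard b
  have hkey : ((ℓ a ∩ ℓ b) ∩ (ℓ b ∩ ℓ c)).card + ((ℓ a ∩ ℓ b) ∪ (ℓ b ∩ ℓ c)).card
      = (k - 1) + (k - 1) := by
    rw [Finset.card_inter_add_card_union, h1, h2]
  have htri : (ℓ a ∩ ℓ b) ∩ (ℓ b ∩ ℓ c) ⊆ ℓ a ∩ ℓ c := by
    intro x hx
    simp only [Finset.mem_inter] at hx ⊢
    exact ⟨hx.1.1, hx.2.2⟩
  have htric : ((ℓ a ∩ ℓ b) ∩ (ℓ b ∩ ℓ c)).card ≤ (ℓ a ∩ ℓ c).card :=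
    Finset.card_le_card htri
  have hcardAC : (ℓ a ∩ ℓ c).card = k - 2 := by omega
  have hcardT : ((ℓ a ∩ ℓ b) ∩ (ℓ b ∩ ℓ c)).card = k - 2 := by omega
  have hTeq : (ℓ a ∩ ℓ b) ∩ (ℓ b ∩ ℓ c) = ℓ a ∩ ℓ c :=
    Finset.eq_of_subset_of_card_le htri (by rw [hcardAC, hcardT])
  refine ⟨hcardAC, ?_, ?_⟩
  · intro x hx
    have : x ∈ (ℓ a ∩ ℓ b) ∩ (ℓ b ∩ ℓ c) := by rw [hTeq]; exact hx
    exact (Finset.mem_inter.mp (Finset.mem_inter.mp this).1).2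
  · have hUcard : ((ℓ a ∩ ℓ b) ∪ (ℓ b ∩ ℓ c)).card = k := by omega
    have hUeq : (ℓ a ∩ ℓ b) ∪ (ℓ b ∩ ℓ c) = ℓ b :=
      Finset.eq_of_subset_of_card_le hsubB (by rw [hUcard, hcard b])
    intro x hx
    have : x ∈ (ℓ a ∩ ℓ b) ∪ (ℓ b ∩ ℓ c) := by rw [hUeq]; exact hx
    rcases Finset.mem_union.mp this with h | h
    · exact Finset.mem_union.mpr (Or.inl (Finset.mem_inter.mp h).1)
    · exact Finset.mem_union.mpr (Or.inr (Finset.mem_inter.mp h).2)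
end

section
/- If a, b, c, d are four distinct vertices of H such that a is adjacent to both b and c, d is adjacent to both b and c, b is adjacent to c, and a is not adjacent to d (so that {a,b,c,d} induces K_4 minus an edge), then exactly one of the two triangles has triple label intersection of size k − 1; that is, |ℓ(a) ∩ ℓ(b) ∩ ℓ(c)| = k − 1 if and only if |ℓ(b) ∩ ℓ(c) ∩ ℓ(d)| ≠ k − 1. -/
set_option maxHeartbeats 1000000 in
/-- Let `H` be a simple graph, `k` a positive integer, and `ℓ` an injective
function assigning to each vertex of `H` a `k`-element subset of `ℕ`, such that
two distinct vertices `u` and `v` are adjacent in `H` if and only if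
`|ℓ(u) ∩ ℓ(v)| = k - 1`. If `a, b, c, d` are four distinct vertices of `H` such
that `a` is adjacent to both `b` and `c`, `d` is adjacent to both `b` and `c`,
`b` is adjacent to `c`, and `a` is not adjacent to `d` (so that `{a,b,c,d}`
induces `K₄` minus an edge), then exactly one of the two triangles has triple
label intersection of size `k - 1`. -/
theorem K4_minus_e_labelling {V : Type*} (H : SimpleGraph V) (k : ℕ) (hk : 0 < k)
    (ℓ : V → Finset ℕ) (hinj : Function.Injective ℓ)
    (hcard : ∀ v, (ℓ v).card = k)
    (hadj : ∀ u v : V, u ≠ v → (H.Adj u v ↔ (ℓ u ∩ ℓ v).card = k - 1))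
    (a b c d : V)
    (hab : a ≠ b) (hac : a ≠ c) (had : a ≠ d) (hbc : b ≠ c) (hbd : b ≠ d)
    (hcd : c ≠ d)
    (hAab : H.Adj a b) (hAac : H.Adj a c) (hAdb : H.Adj d b) (hAdc : H.Adj d c)
    (hAbc : H.Adj b c) (hnad : ¬ H.Adj a d) :
    ((ℓ a ∩ ℓ b ∩ ℓ c).card = k - 1 ↔ ¬ (ℓ b ∩ ℓ c ∩ ℓ d).card = k - 1) := by
  have cab : (ℓ a ∩ ℓ b).card = k - 1 := (hadj a b hab).mp hAab
  have cac : (ℓ a ∩ ℓ c).card = k - 1 := (hadj a c hac).mp hAac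
  have cdb : (ℓ d ∩ ℓ b).card = k - 1 := (hadj d b hbd.symm).mp hAdb
  have cdc : (ℓ d ∩ ℓ c).card = k - 1 := (hadj d c hcd.symm).mp hAdc
  have cbc : (ℓ b ∩ ℓ c).card = k - 1 := (hadj b c hbc).mp hAbc
  have cad : (ℓ a ∩ ℓ d).card ≠ k - 1 := fun h => hnad ((hadj a d had).mpr h)
  have haned : ℓ a ≠ ℓ d := fun h => had (hinj h)
  -- |ℓa ∩ ℓd| < k
  have hadlt : (ℓ a ∩ ℓ d).card < k := by
    have h1 : (ℓ a ∩ ℓ d).card ≤ k :=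
      (hcard a) ▸ Finset.card_le_card Finset.inter_subset_left
    rcases h1.lt_or_eq with h | h
    · exact h
    · exfalso
      have heq : ℓ a ∩ ℓ d = ℓ a :=
        Finset.eq_of_subset_of_card_le Finset.inter_subset_left
          (by rw [h, hcard a])
      have hsub : ℓ a ⊆ ℓ d := by rw [← heq]; exact Finset.inter_subset_right
      exact haned (Finset.eq_of_subset_of_card_le hsub
        (by rw [hcard a, hcard d]))
  have hk2 : 2 ≤ k := by omega
  -- bounds on the triple intersections
  have ta_le : (ℓ a ∩ ℓ b ∩ ℓ c).card ≤ k - 1 := by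
    rw [← cab]; exact Finset.card_le_card Finset.inter_subset_left
  have td_le : (ℓ b ∩ ℓ c ∩ ℓ d).card ≤ k - 1 := by
    rw [← cbc]; exact Finset.card_le_card Finset.inter_subset_left
  have ta_ge : k ≤ (ℓ a ∩ ℓ b ∩ ℓ c).card + 2 := by
    have h := Finset.card_inter_add_card_union (ℓ a ∩ ℓ b) (ℓ a ∩ ℓ c)
    have he : (ℓ a ∩ ℓ b) ∩ (ℓ a ∩ ℓ c) = ℓ a ∩ ℓ b ∩ ℓ c := by
      ext x; simp only [Finset.mem_inter]; tauto
    have hu : (ℓ a ∩ ℓ b) ∪ (ℓ a ∩ ℓ c) ⊆ ℓ a :=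
      Finset.union_subset Finset.inter_subset_left Finset.inter_subset_left
    have hu' : ((ℓ a ∩ ℓ b) ∪ (ℓ a ∩ ℓ c)).card ≤ k :=
      (hcard a) ▸ Finset.card_le_card hu
    rw [he, cab, cac] at h
    omega
  have td_ge : k ≤ (ℓ b ∩ ℓ c ∩ ℓ d).card + 2 := by
    have h := Finset.card_inter_add_card_union (ℓ d ∩ ℓ b) (ℓ d ∩ ℓ c)
    have he : (ℓ d ∩ ℓ b) ∩ (ℓ d ∩ ℓ c) = ℓ b ∩ ℓ c ∩ ℓ d := by
      ext x; simp only [Finset.mem_inter]; tauto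
    have hu : (ℓ d ∩ ℓ b) ∪ (ℓ d ∩ ℓ c) ⊆ ℓ d :=
      Finset.union_subset Finset.inter_subset_left Finset.inter_subset_left
    have hu' : ((ℓ d ∩ ℓ b) ∪ (ℓ d ∩ ℓ c)).card ≤ k :=
      (hcard d) ▸ Finset.card_le_card hu
    rw [he, cdb, cdc] at h
    omega
  -- not both triples of size k-1
  have hboth1 : ¬ ((ℓ a ∩ ℓ b ∩ ℓ c).card = k - 1 ∧
      (ℓ b ∩ ℓ c ∩ ℓ d).card = k - 1) := by
    rintro ⟨h1, h2⟩
    have hsa : ℓ b ∩ ℓ c ⊆ ℓ a := by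
      have heq : ℓ a ∩ ℓ b ∩ ℓ c = ℓ b ∩ ℓ c :=
        Finset.eq_of_subset_of_card_le
          (by intro x hx; simp only [Finset.mem_inter] at hx ⊢; tauto)
          (by rw [h1, cbc])
      intro x hx
      rw [← heq] at hx
      simp only [Finset.mem_inter] at hx; tauto
    have hsd : ℓ b ∩ ℓ c ⊆ ℓ d := by
      have heq : ℓ b ∩ ℓ c ∩ ℓ d = ℓ b ∩ ℓ c :=
        Finset.eq_of_subset_of_card_le Finset.inter_subset_left
          (by rw [h2, cbc])
      intro x hx
      rw [← heq] at hx
      simp only [Finset.mem_inter] at hx; tauto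
    have hsub : ℓ b ∩ ℓ c ⊆ ℓ a ∩ ℓ d := Finset.subset_inter hsa hsd
    have := Finset.card_le_card hsub
    omega
  -- not both triples of size k-2
  have hboth2 : ¬ ((ℓ a ∩ ℓ b ∩ ℓ c).card = k - 2 ∧
      (ℓ b ∩ ℓ c ∩ ℓ d).card = k - 2) := by
    rintro ⟨h1, h2⟩
    have hA : ℓ a ⊆ ℓ b ∪ ℓ c := by
      have h := Finset.card_inter_add_card_union (ℓ a ∩ ℓ b) (ℓ a ∩ ℓ c)
      have he : (ℓ a ∩ ℓ b) ∩ (ℓ a ∩ ℓ c) = ℓ a ∩ ℓ b ∩ ℓ c := by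
        ext x; simp only [Finset.mem_inter]; tauto
      have he2 : (ℓ a ∩ ℓ b) ∪ (ℓ a ∩ ℓ c) = ℓ a ∩ (ℓ b ∪ ℓ c) := by
        ext x; simp only [Finset.mem_inter, Finset.mem_union]; tauto
      rw [he, he2, h1, cab, cac] at h
      have hc : (ℓ a ∩ (ℓ b ∪ ℓ c)).card = k := by omega
      have heq : ℓ a ∩ (ℓ b ∪ ℓ c) = ℓ a :=
        Finset.eq_of_subset_of_card_le Finset.inter_subset_left
          (by rw [hc, hcard a])
      intro x hx
      rw [← heq] at hx
      exact (Finset.mem_inter.mp hx).2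
    have hD : ℓ d ⊆ ℓ b ∪ ℓ c := by
      have h := Finset.card_inter_add_card_union (ℓ d ∩ ℓ b) (ℓ d ∩ ℓ c)
      have he : (ℓ d ∩ ℓ b) ∩ (ℓ d ∩ ℓ c) = ℓ b ∩ ℓ c ∩ ℓ d := by
        ext x; simp only [Finset.mem_inter]; tauto
      have he2 : (ℓ d ∩ ℓ b) ∪ (ℓ d ∩ ℓ c) = ℓ d ∩ (ℓ b ∪ ℓ c) := by
        ext x; simp only [Finset.mem_inter, Finset.mem_union]; tauto
      rw [he, he2, h2, cdb, cdc] at h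
      have hc : (ℓ d ∩ (ℓ b ∪ ℓ c)).card = k := by omega
      have heq : ℓ d ∩ (ℓ b ∪ ℓ c) = ℓ d :=
        Finset.eq_of_subset_of_card_le Finset.inter_subset_left
          (by rw [hc, hcard d])
      intro x hx
      rw [← heq] at hx
      exact (Finset.mem_inter.mp hx).2
    have hbcU : (ℓ b ∪ ℓ c).card = k + 1 := by
      have h := Finset.card_inter_add_card_union (ℓ b) (ℓ c)
      rw [cbc, hcard b, hcard c] at h
      omega
    have hADu : (ℓ a ∪ ℓ d).card ≤ k + 1 := by
      rw [← hbcU]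
      exact Finset.card_le_card (Finset.union_subset hA hD)
    have h := Finset.card_inter_add_card_union (ℓ a) (ℓ d)
    rw [hcard a, hcard d] at h
    omega
  omega
end

section
/- If c, x, y, z are four distinct vertices of H such that c is adjacent to each of x, y, z and x, y, z are pairwise nonadjacent (so that {c,x,y,z} induces K_{1,3}), then k ≥ 3 and there exist a finite set X ⊆ ℕ with |X| = k − 3 and pairwise distinct elements e₁, e₂, e₃, e₄, e₅, e₆ of ℕ, none belonging to X, such that ℓ(c) = X ∪ {e₁,e₂,e₃}, ℓ(x) = X ∪ {e₂,e₃,e₄}, ℓ(y) = X ∪ {e₁,e₃,e₅}, and ℓ(z) = X ∪ {e₁,e₂,e₆}. -/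
/-- If `A`, `B` are `k`-sets with `|A ∩ B| = k - 1`, then `B` is obtained from
`A` by deleting one element and adding a new one. -/
lemma nbr_struct {k : ℕ} {A B : Finset ℕ} (hA : A.card = k) (hB : B.card = k)
    (hint : (A ∩ B).card = k - 1) (hk : 0 < k) :
    ∃ a d, a ∈ A ∧ d ∉ A ∧ B = A.erase a ∪ {d} := by
  have h1 : (A \ B).card = 1 := by
    have := Finset.card_sdiff_add_card_inter A B
    omega
  have h2 : (B \ A).card = 1 := by
    have := Finset.card_sdiff_add_card_inter B A
    rw [Finset.inter_comm] at this
    omega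
  obtain ⟨a, ha⟩ := Finset.card_eq_one.mp h1
  obtain ⟨d, hd⟩ := Finset.card_eq_one.mp h2
  have haB : a ∈ A ∧ a ∉ B := Finset.mem_sdiff.mp (ha ▸ Finset.mem_singleton_self a)
  have hdB : d ∈ B ∧ d ∉ A := Finset.mem_sdiff.mp (hd ▸ Finset.mem_singleton_self d)
  refine ⟨a, d, haB.1, hdB.2, ?_⟩
  ext e
  have hAB : ∀ e, e ∈ A → e ∉ B → e = a := by
    intro e h1' h2'
    have : e ∈ A \ B := Finset.mem_sdiff.mpr ⟨h1', h2'⟩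
    simpa [ha] using this
  have hBA : ∀ e, e ∈ B → e ∉ A → e = d := by
    intro e h1' h2'
    have : e ∈ B \ A := Finset.mem_sdiff.mpr ⟨h1', h2'⟩
    simpa [hd] using this
  simp only [Finset.mem_union, Finset.mem_erase, Finset.mem_singleton]
  constructor
  · intro heB
    by_cases heA : e ∈ A
    · exact Or.inl ⟨fun h => haB.2 (h ▸ heB), heA⟩
    · exact Or.inr (hBA e heB heA)
  · rintro (⟨hea, heA⟩ | rfl)
    · by_contra heB
      exact hea (hAB e heA heB)
    · exact hdB.1

lemma pair_neq {k : ℕ} {A : Finset ℕ} {u v : Finset ℕ} {a a' d d' : ℕ}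
    (hA : A.card = k) (ha : a ∈ A) (ha' : a' ∈ A) (hd : d ∉ A) (hd' : d' ∉ A)
    (hu : u = A.erase a ∪ {d}) (hv : v = A.erase a' ∪ {d'})
    (hne : u ≠ v) (hint : (u ∩ v).card ≠ k - 1) : a ≠ a' ∧ d ≠ d' := by
  have haa : a ≠ a' := by
    rintro rfl
    by_cases hdd : d = d'
    · exact hne (by rw [hu, hv, hdd])
    · apply hint
      have huv : u ∩ v = A.erase a := by
        ext e
        simp only [hu, hv, Finset.mem_inter, Finset.mem_union, Finset.mem_erase,
          Finset.mem_singleton]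
        have h1 : e = d → e ∈ A → False := fun h h' => hd (h ▸ h')
        have h2 : e = d' → e ∈ A → False := fun h h' => hd' (h ▸ h')
        have h3 : e = d → e = d' → False := fun h h' => hdd (h.symm.trans h')
        tauto
      rw [huv, Finset.card_erase_of_mem ha, hA]
  refine ⟨haa, ?_⟩
  rintro rfl
  apply hint
  have hk2 : 2 ≤ k := by
    have := Finset.one_lt_card.mpr ⟨a, ha, a', ha', haa⟩
    omega
  have huv : u ∩ v = ((A.erase a).erase a') ∪ {d} := by
    ext e
    simp only [hu, hv, Finset.mem_inter, Finset.mem_union, Finset.mem_erase,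
      Finset.mem_singleton]
    have h1 : e = d → e ∈ A → False := fun h h' => hd (h ▸ h')
    tauto
  have hdisj : Disjoint ((A.erase a).erase a') {d} := by
    rw [Finset.disjoint_singleton_right]
    simp only [Finset.mem_erase, not_and]
    intro _ _ h
    exact hd h
  have ha'e : a' ∈ A.erase a := Finset.mem_erase.mpr ⟨haa.symm, ha'⟩
  rw [huv, Finset.card_union_of_disjoint hdisj, Finset.card_singleton,
    Finset.card_erase_of_mem ha'e, Finset.card_erase_of_mem ha, hA]
  omega

/-- Let `H` be a simple graph, `k` a positive integer, and `ℓ` an injective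
function assigning to each vertex of `H` a `k`-element subset of `ℕ`, such that
two distinct vertices `u` and `v` are adjacent in `H` if and only if
`|ℓ(u) ∩ ℓ(v)| = k - 1`. If `c, x, y, z` are four distinct vertices of `H` such
that `c` is adjacent to each of `x, y, z` and `x, y, z` are pairwise nonadjacent
(so that `{c,x,y,z}` induces `K_{1,3}`), then `k ≥ 3` and there exist a finite
set `X ⊆ ℕ` with `|X| = k - 3` and pairwise distinct elements
`e₁, e₂, e₃, e₄, e₅, e₆` of `ℕ`, none belonging to `X`, such that
`ℓ(c) = X ∪ {e₁,e₂,e₃}`, `ℓ(x) = X ∪ {e₂,e₃,e₄}`, `ℓ(y) = X ∪ {e₁,e₃,e₅}`, and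
`ℓ(z) = X ∪ {e₁,e₂,e₆}`. -/
theorem claw_labelling {V : Type*} (H : SimpleGraph V) (k : ℕ) (hk : 0 < k)
    (ℓ : V → Finset ℕ) (hinj : Function.Injective ℓ)
    (hcard : ∀ v, (ℓ v).card = k)
    (hadj : ∀ u v : V, u ≠ v → (H.Adj u v ↔ (ℓ u ∩ ℓ v).card = k - 1))
    (c x y z : V)
    (hcx : c ≠ x) (hcy : c ≠ y) (hcz : c ≠ z) (hxy : x ≠ y) (hxz : x ≠ z)
    (hyz : y ≠ z)
    (hAcx : H.Adj c x) (hAcy : H.Adj c y) (hAcz : H.Adj c z)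
    (hnxy : ¬ H.Adj x y) (hnxz : ¬ H.Adj x z) (hnyz : ¬ H.Adj y z) :
    3 ≤ k ∧
      ∃ X : Finset ℕ, X.card = k - 3 ∧
        ∃ e₁ e₂ e₃ e₄ e₅ e₆ : ℕ,
          ([e₁, e₂, e₃, e₄, e₅, e₆] : List ℕ).Pairwise (· ≠ ·) ∧
          (∀ e ∈ ([e₁, e₂, e₃, e₄, e₅, e₆] : List ℕ), e ∉ X) ∧
          ℓ c = X ∪ {e₁, e₂, e₃} ∧
          ℓ x = X ∪ {e₂, e₃, e₄} ∧
          ℓ y = X ∪ {e₁, e₃, e₅} ∧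
          ℓ z = X ∪ {e₁, e₂, e₆} := by
  have hA : (ℓ c).card = k := hcard c
  have hix : (ℓ c ∩ ℓ x).card = k - 1 := (hadj c x hcx).mp hAcx
  have hiy : (ℓ c ∩ ℓ y).card = k - 1 := (hadj c y hcy).mp hAcy
  have hiz : (ℓ c ∩ ℓ z).card = k - 1 := (hadj c z hcz).mp hAcz
  obtain ⟨a₁, d₁, ha₁, hd₁, hx⟩ := nbr_struct hA (hcard x) hix hk
  obtain ⟨a₂, d₂, ha₂, hd₂, hy⟩ := nbr_struct hA (hcard y) hiy hk
  obtain ⟨a₃, d₃, ha₃, hd₃, hz⟩ := nbr_struct hA (hcard z) hiz hk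
  have hxyne : ℓ x ≠ ℓ y := fun h => hxy (hinj h)
  have hxzne : ℓ x ≠ ℓ z := fun h => hxz (hinj h)
  have hyzne : ℓ y ≠ ℓ z := fun h => hyz (hinj h)
  have hixy : (ℓ x ∩ ℓ y).card ≠ k - 1 := fun h => hnxy ((hadj x y hxy).mpr h)
  have hixz : (ℓ x ∩ ℓ z).card ≠ k - 1 := fun h => hnxz ((hadj x z hxz).mpr h)
  have hiyz : (ℓ y ∩ ℓ z).card ≠ k - 1 := fun h => hnyz ((hadj y z hyz).mpr h)
  obtain ⟨ha12, hd12⟩ := pair_neq hA ha₁ ha₂ hd₁ hd₂ hx hy hxyne hixy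
  obtain ⟨ha13, hd13⟩ := pair_neq hA ha₁ ha₃ hd₁ hd₃ hx hz hxzne hixz
  obtain ⟨ha23, hd23⟩ := pair_neq hA ha₂ ha₃ hd₂ hd₃ hy hz hyzne hiyz
  have hsub : ({a₁, a₂, a₃} : Finset ℕ) ⊆ ℓ c := by
    intro e he
    simp only [Finset.mem_insert, Finset.mem_singleton] at he
    rcases he with rfl | rfl | rfl <;> assumption
  have hc3 : ({a₁, a₂, a₃} : Finset ℕ).card = 3 := by
    rw [Finset.card_insert_of_notMem (by simp [ha12, ha13]),
      Finset.card_insert_of_notMem (by simp [ha23]), Finset.card_singleton]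
  have hk3 : 3 ≤ k := by
    have := Finset.card_le_card hsub
    omega
  have haD : ∀ (i j : ℕ), i ∈ ℓ c → j ∉ ℓ c → i ≠ j := fun i j hi hj h => hj (h ▸ hi)
  have n14 : a₁ ≠ d₁ := haD _ _ ha₁ hd₁
  have n15 : a₁ ≠ d₂ := haD _ _ ha₁ hd₂
  have n16 : a₁ ≠ d₃ := haD _ _ ha₁ hd₃
  have n24 : a₂ ≠ d₁ := haD _ _ ha₂ hd₁
  have n25 : a₂ ≠ d₂ := haD _ _ ha₂ hd₂
  have n26 : a₂ ≠ d₃ := haD _ _ ha₂ hd₃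
  have n34 : a₃ ≠ d₁ := haD _ _ ha₃ hd₁
  have n35 : a₃ ≠ d₂ := haD _ _ ha₃ hd₂
  have n36 : a₃ ≠ d₃ := haD _ _ ha₃ hd₃
  refine ⟨hk3, ℓ c \ {a₁, a₂, a₃}, ?_, a₁, a₂, a₃, d₁, d₂, d₃, ?_, ?_, ?_, ?_, ?_, ?_⟩
  · rw [Finset.card_sdiff_of_subset hsub, hA, hc3]
  · simp [List.pairwise_cons, ha12, ha13, ha23, hd12, hd13, hd23,
      n14, n15, n16, n24, n25, n26, n34, n35, n36]
  · intro e he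
    simp only [List.mem_cons, List.not_mem_nil, or_false] at he
    rcases he with rfl | rfl | rfl | rfl | rfl | rfl <;>
      simp [Finset.mem_sdiff, hd₁, hd₂, hd₃]
  · exact (Finset.sdiff_union_of_subset hsub).symm
  · rw [hx]
    ext e
    simp only [Finset.mem_union, Finset.mem_erase, Finset.mem_sdiff,
      Finset.mem_insert, Finset.mem_singleton]
    constructor
    · rintro (⟨he1, heA⟩ | rfl)
      · by_cases h2 : e = a₂
        · exact Or.inr (Or.inl h2)
        · by_cases h3 : e = a₃
          · exact Or.inr (Or.inr (Or.inl h3))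
          · exact Or.inl ⟨heA, by tauto⟩
      · exact Or.inr (Or.inr (Or.inr rfl))
    · rintro (⟨heA, hne⟩ | rfl | rfl | rfl)
      · exact Or.inl ⟨fun h => hne (Or.inl h), heA⟩
      · exact Or.inl ⟨Ne.symm ha12, ha₂⟩
      · exact Or.inl ⟨Ne.symm ha13, ha₃⟩
      · exact Or.inr rfl
  · rw [hy]
    ext e
    simp only [Finset.mem_union, Finset.mem_erase, Finset.mem_sdiff,
      Finset.mem_insert, Finset.mem_singleton]
    constructor
    · rintro (⟨he2, heA⟩ | rfl)
      · by_cases h1 : e = a₁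
        · exact Or.inr (Or.inl h1)
        · by_cases h3 : e = a₃
          · exact Or.inr (Or.inr (Or.inl h3))
          · exact Or.inl ⟨heA, by tauto⟩
      · exact Or.inr (Or.inr (Or.inr rfl))
    · rintro (⟨heA, hne⟩ | rfl | rfl | rfl)
      · exact Or.inl ⟨fun h => hne (Or.inr (Or.inl h)), heA⟩
      · exact Or.inl ⟨ha12, ha₁⟩
      · exact Or.inl ⟨Ne.symm ha23, ha₃⟩
      · exact Or.inr rfl
  · rw [hz]
    ext e
    simp only [Finset.mem_union, Finset.mem_erase, Finset.mem_sdiff,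
      Finset.mem_insert, Finset.mem_singleton]
    constructor
    · rintro (⟨he3, heA⟩ | rfl)
      · by_cases h1 : e = a₁
        · exact Or.inr (Or.inl h1)
        · by_cases h2 : e = a₂
          · exact Or.inr (Or.inr (Or.inl h2))
          · exact Or.inl ⟨heA, by tauto⟩
      · exact Or.inr (Or.inr (Or.inr rfl))
    · rintro (⟨heA, hne⟩ | rfl | rfl | rfl)
      · exact Or.inl ⟨fun h => hne (Or.inr (Or.inr h)), heA⟩
      · exact Or.inl ⟨ha13, ha₁⟩
      · exact Or.inl ⟨ha23, ha₂⟩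
      · exact Or.inr rfl
end

section
/- The complete bipartite graph K_{2,3} is minimally unlabellable: K_{2,3} is not labellable, but every proper induced subgraph of K_{2,3} is labellable. -/
set_option maxHeartbeats 1000000

open Finset

lemma inter_card_le_of_ne' {k : ℕ} {A B : Finset ℕ} (hA : A.card = k) (hB : B.card = k)
    (h : A ≠ B) : (A ∩ B).card + 1 ≤ k := by
  have h1 : (A ∩ B).card ≤ k := hA ▸ card_le_card inter_subset_left
  rcases eq_or_lt_of_le h1 with he | hl
  · exfalso
    have e1 : A ∩ B = A := eq_of_subset_of_card_le inter_subset_left (by omega)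
    have e2 : A ∩ B = B := eq_of_subset_of_card_le inter_subset_right (by omega)
    exact h (e1 ▸ e2)
  · omega

lemma key_lemma' {k : ℕ} (hk : 0 < k) (A B X Y Z : Finset ℕ)
    (hA : A.card = k) (hB : B.card = k) (hX : X.card = k) (hY : Y.card = k) (hZ : Z.card = k)
    (hABne : A ≠ B) (hXY : X ≠ Y) (hXZ : X ≠ Z) (hYZ : Y ≠ Z)
    (hXA : (X ∩ A).card = k - 1) (hXB : (X ∩ B).card = k - 1)
    (hYA : (Y ∩ A).card = k - 1) (hYB : (Y ∩ B).card = k - 1)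
    (hZA : (Z ∩ A).card = k - 1) (hZB : (Z ∩ B).card = k - 1)
    (hAB : (A ∩ B).card ≠ k - 1)
    (hXYn : (X ∩ Y).card ≠ k - 1) (hXZn : (X ∩ Z).card ≠ k - 1)
    (hYZn : (Y ∩ Z).card ≠ k - 1) : False := by
  have hABle := inter_card_le_of_ne' hA hB hABne
  have lower : ∀ C : Finset ℕ, C.card = k → (C ∩ A).card = k - 1 → (C ∩ B).card = k - 1 →
      k ≤ (C ∩ (A ∩ B)).card + 2 := by
    intro C hC hCA hCB
    have e1 := Finset.card_inter_add_card_union (C ∩ A) (C ∩ B)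
    have e2 : (C ∩ A) ∩ (C ∩ B) = C ∩ (A ∩ B) := by ext a; simp; tauto
    have e3 : ((C ∩ A) ∪ (C ∩ B)).card ≤ k := by
      have : (C ∩ A) ∪ (C ∩ B) ⊆ C := union_subset inter_subset_left inter_subset_left
      calc ((C ∩ A) ∪ (C ∩ B)).card ≤ C.card := card_le_card this
        _ = k := hC
    rw [e2] at e1
    omega
  have hCm : ∀ C : Finset ℕ, C.card = k → (C ∩ A).card = k - 1 → (C ∩ B).card = k - 1 →
      A ∩ B ⊆ C := by
    intro C hC hCA hCB
    have h1 := lower C hC hCA hCB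
    have h2 : (C ∩ (A ∩ B)).card ≤ (A ∩ B).card := card_le_card inter_subset_right
    have h3 : C ∩ (A ∩ B) = A ∩ B :=
      eq_of_subset_of_card_le inter_subset_right (by omega)
    intro a ha
    have : a ∈ C ∩ (A ∩ B) := h3.symm ▸ ha
    exact (mem_inter.mp this).1
  have hm2 : (A ∩ B).card + 2 = k := by
    have := lower X hX hXA hXB
    have h2 : (X ∩ (A ∩ B)).card ≤ (A ∩ B).card := card_le_card inter_subset_right
    omega
  have extract : ∀ C : Finset ℕ, C.card = k → (C ∩ A).card = k - 1 →
      ∃ a, a ∈ C ∧ a ∈ A ∧ a ∉ B := by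
    intro C hC hCA
    have hns : ¬ (C ∩ A ⊆ B) := by
      intro h
      have : C ∩ A ⊆ A ∩ B := subset_inter inter_subset_right h
      have := card_le_card this
      omega
    obtain ⟨a, ha⟩ := Finset.sdiff_nonempty.mpr hns
    rw [mem_sdiff, mem_inter] at ha
    exact ⟨a, ha.1.1, ha.1.2, ha.2⟩
  have pairne : ∀ C D : Finset ℕ, ∀ a : ℕ, C.card = k → D.card = k → C ≠ D →
      (C ∩ D).card ≠ k - 1 → A ∩ B ⊆ C → A ∩ B ⊆ D → a ∈ C → a ∈ D → a ∉ B → False := by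
    intro C D a hC hD hCD hn hmC hmD haC haD haB
    have ham : a ∉ A ∩ B := fun h => haB (mem_inter.mp h).2
    have hsub : insert a (A ∩ B) ⊆ C ∩ D := by
      intro x hx
      rcases mem_insert.mp hx with rfl | hx
      · exact mem_inter.mpr ⟨haC, haD⟩
      · exact mem_inter.mpr ⟨hmC hx, hmD hx⟩
    have h1 : (insert a (A ∩ B)).card = (A ∩ B).card + 1 := card_insert_of_notMem ham
    have h2 := card_le_card hsub
    have h3 := inter_card_le_of_ne' hC hD hCD
    omega
  obtain ⟨ax, haxX, haxA, haxB⟩ := extract X hX hXA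
  obtain ⟨ay, hayY, hayA, hayB⟩ := extract Y hY hYA
  obtain ⟨az, hazZ, hazA, hazB⟩ := extract Z hZ hZA
  have hmX := hCm X hX hXA hXB
  have hmY := hCm Y hY hYA hYB
  have hmZ := hCm Z hZ hZA hZB
  have hxy : ax ≠ ay := fun h =>
    pairne X Y ax hX hY hXY hXYn hmX hmY haxX (h ▸ hayY) haxB
  have hxz : ax ≠ az := fun h =>
    pairne X Z ax hX hZ hXZ hXZn hmX hmZ haxX (h ▸ hazZ) haxB
  have hyz : ay ≠ az := fun h =>
    pairne Y Z ay hY hZ hYZ hYZn hmY hmZ hayY (h ▸ hazZ) hayB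
  have hsub : ({ax, ay, az} : Finset ℕ) ⊆ A \ B := by
    intro x hx
    simp only [mem_insert, mem_singleton] at hx
    rcases hx with rfl | rfl | rfl <;> simp [mem_sdiff, *]
  have hcard3 : ({ax, ay, az} : Finset ℕ).card = 3 := by
    rw [card_insert_of_notMem (by simp [hxy, hxz]),
      card_insert_of_notMem (by simp [hyz]), card_singleton]
  have hsd : (A \ B).card + (A ∩ B).card = A.card := Finset.card_sdiff_add_card_inter A B
  have := card_le_card hsub
  omega

lemma labellable_on {V : Type*} (G : SimpleGraph V) (s : Set V)
    (k : ℕ) (hk : 0 < k) (ℓ : V → Finset ℕ)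
    (hinj : ∀ u ∈ s, ∀ v ∈ s, ℓ u = ℓ v → u = v)
    (hcard : ∀ v, (ℓ v).card = k)
    (hadj : ∀ u ∈ s, ∀ v ∈ s, u ≠ v → (G.Adj u v ↔ (ℓ u ∩ ℓ v).card = k - 1)) :
    Labellable (G.induce s) := by
  refine ⟨k, hk, fun v => ℓ v, ?_, fun v => hcard v, ?_⟩
  · intro u v h
    exact Subtype.ext (hinj u u.2 v v.2 h)
  · intro u v huv
    have h : (u : V) ≠ v := fun h => huv (Subtype.ext h)
    simpa using hadj u u.2 v v.2 h

instance K23adjdec : DecidableRel (completeBipartiteGraph (Fin 2) (Fin 3)).Adj := fun u w =>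
  inferInstanceAs (Decidable (u.isLeft ∧ w.isRight ∨ u.isRight ∧ w.isLeft))

abbrev K23 := completeBipartiteGraph (Fin 2) (Fin 3)

def Lab0 : Fin 2 ⊕ Fin 3 → Finset ℕ :=
  Sum.elim ![{7,8,9}, {1,2,3}] ![{1,2,4}, {1,3,5}, {2,3,6}]

def Lab1 : Fin 2 ⊕ Fin 3 → Finset ℕ :=
  Sum.elim ![{1,2,3}, {7,8,9}] ![{1,2,4}, {1,3,5}, {2,3,6}]

def LabR0 : Fin 2 ⊕ Fin 3 → Finset ℕ :=
  Sum.elim ![{1,2}, {3,4}] ![{5,6}, {2,3}, {1,4}]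

def LabR1 : Fin 2 ⊕ Fin 3 → Finset ℕ :=
  Sum.elim ![{1,2}, {3,4}] ![{2,3}, {5,6}, {1,4}]

def LabR2 : Fin 2 ⊕ Fin 3 → Finset ℕ :=
  Sum.elim ![{1,2}, {3,4}] ![{2,3}, {1,4}, {5,6}]

lemma labellable_aux (s : Set (Fin 2 ⊕ Fin 3)) (v0 : Fin 2 ⊕ Fin 3) (hv0 : v0 ∉ s)
    (k : ℕ) (hk : 0 < k) (ℓ : Fin 2 ⊕ Fin 3 → Finset ℕ) (hcard : ∀ v, (ℓ v).card = k)
    (h : ∀ u w : Fin 2 ⊕ Fin 3, u ≠ v0 → w ≠ v0 → (ℓ u = ℓ w → u = w) ∧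
      (u ≠ w → (K23.Adj u w ↔ (ℓ u ∩ ℓ w).card = k - 1))) :
    Labellable (K23.induce s) := by
  apply labellable_on _ s k hk ℓ
  · intro u hu w hw
    exact (h u w (fun e => hv0 (e ▸ hu)) (fun e => hv0 (e ▸ hw))).1
  · exact hcard
  · intro u hu w hw hne
    exact (h u w (fun e => hv0 (e ▸ hu)) (fun e => hv0 (e ▸ hw))).2 hne

/-- The complete bipartite graph `K_{2,3}` is minimally unlabellable: it is not
labellable, but every proper induced subgraph of it is labellable. -/
theorem K23_minimally_unlabellable :
    ¬ Labellable (completeBipartiteGraph (Fin 2) (Fin 3)) ∧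
      ∀ s : Set (Fin 2 ⊕ Fin 3), s ≠ Set.univ →
        Labellable ((completeBipartiteGraph (Fin 2) (Fin 3)).induce s) := by
  constructor
  · rintro ⟨k, hk, ℓ, hinj, hcard, hadj⟩
    have hne : ∀ u v : Fin 2 ⊕ Fin 3, u ≠ v → ℓ u ≠ ℓ v :=
      fun u v h h' => h (hinj h')
    have adj : ∀ (j : Fin 3) (i : Fin 2), (ℓ (.inr j) ∩ ℓ (.inl i)).card = k - 1 := by
      intro j i
      exact (hadj _ _ (by simp)).mp (by simp)
    have nadjL : (ℓ (.inl 0) ∩ ℓ (.inl 1)).card ≠ k - 1 := by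
      intro h
      exact (by decide : ¬ K23.Adj (.inl 0) (.inl 1)) ((hadj _ _ (by decide)).mpr h)
    have nadjR : ∀ j j' : Fin 3, j ≠ j' → (ℓ (.inr j) ∩ ℓ (.inr j')).card ≠ k - 1 := by
      intro j j' hjj h
      have := (hadj (.inr j) (.inr j') (by simpa using hjj)).mpr h
      simp at this
    exact key_lemma' hk (ℓ (.inl 0)) (ℓ (.inl 1)) (ℓ (.inr 0)) (ℓ (.inr 1)) (ℓ (.inr 2))
      (hcard _) (hcard _) (hcard _) (hcard _) (hcard _)
      (hne _ _ (by decide)) (hne _ _ (by decide)) (hne _ _ (by decide)) (hne _ _ (by decide))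
      (adj 0 0) (adj 0 1) (adj 1 0) (adj 1 1) (adj 2 0) (adj 2 1)
      nadjL (nadjR 0 1 (by decide)) (nadjR 0 2 (by decide)) (nadjR 1 2 (by decide))
  · intro s hs
    have hex : ∃ v, v ∉ s := by
      by_contra h
      push_neg at h
      exact hs (Set.eq_univ_iff_forall.mpr h)
    obtain ⟨v0, hv0⟩ := hex
    rcases v0 with i | i
    · fin_cases i
      · exact labellable_aux s _ hv0 3 (by norm_num) Lab0 (by decide) (by decide)
      · exact labellable_aux s _ hv0 3 (by norm_num) Lab1 (by decide) (by decide)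
    · fin_cases i
      · exact labellable_aux s _ hv0 2 (by norm_num) LabR0 (by decide) (by decide)
      · exact labellable_aux s _ hv0 2 (by norm_num) LabR1 (by decide) (by decide)
      · exact labellable_aux s _ hv0 2 (by norm_num) LabR2 (by decide) (by decide)
end

section
/- The graph obtained from the complete graph K_5 by deleting a single edge is minimally unlabellable: it is not labellable, but every proper induced subgraph of it is labellable. -/
/-- The complete graph `K₅` with the single edge `{0,1}` deleted: two distinct
vertices of `Fin 5` are adjacent unless they are `0` and `1`. -/
def K5minusEdge : SimpleGraph (Fin 5) :=
  SimpleGraph.fromRel (fun a b => ¬ ((a = 0 ∧ b = 1) ∨ (a = 1 ∧ b = 0)))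

lemma K5adj (u v : Fin 5) :
    K5minusEdge.Adj u v ↔ u ≠ v ∧ ¬ ((u = 0 ∧ v = 1) ∨ (u = 1 ∧ v = 0)) := by
  rw [K5minusEdge, SimpleGraph.fromRel_adj]
  constructor
  · rintro ⟨h, h' | h'⟩ <;> exact ⟨h, fun hc => h' (by tauto)⟩
  · rintro ⟨h, h'⟩; exact ⟨h, Or.inl h'⟩

/-- two (k-1)-subsets of a common (k-1)-card set are equal -/
lemma eq_of_two_subs {n : ℕ} {X Y Z : Finset ℕ} (hXZ : X ⊆ Z) (hYZ : Y ⊆ Z)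
    (hX : X.card = n) (hY : Y.card = n) (hZ : Z.card = n) : X = Y := by
  have h1 : X = Z := Finset.eq_of_subset_of_card_le hXZ (by omega)
  have h2 : Y = Z := Finset.eq_of_subset_of_card_le hYZ (by omega)
  rw [h1, h2]

/-- if a k-set W meets C and D in k-1 elements but has an element outside both,
then C ∩ D ⊆ W. -/
lemma escape {k : ℕ} {W C D : Finset ℕ} {x : ℕ} (hk : 0 < k)
    (hW : W.card = k) (hWC : (W ∩ C).card = k - 1) (hWD : (W ∩ D).card = k - 1)
    (hCD : (C ∩ D).card = k - 1) (hx : x ∈ W) (hxC : x ∉ C) (hxD : x ∉ D) :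
    C ∩ D ⊆ W := by
  have h1 : W ∩ (C ∪ D) ⊆ W.erase x := by
    intro y hy
    simp only [Finset.mem_inter, Finset.mem_union] at hy
    refine Finset.mem_erase.2 ⟨?_, hy.1⟩
    rintro rfl; tauto
  have h2 : (W ∩ (C ∪ D)).card ≤ k - 1 := by
    have := Finset.card_le_card h1
    rwa [Finset.card_erase_of_mem hx, hW] at this
  have hu : W ∩ C ∪ W ∩ D = W ∩ (C ∪ D) := (Finset.inter_union_distrib_left W C D).symm
  have hi : (W ∩ C) ∩ (W ∩ D) = W ∩ (C ∩ D) := by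
    ext y; simp only [Finset.mem_inter]; tauto
  have h3 := Finset.card_union_add_card_inter (W ∩ C) (W ∩ D)
  rw [hu, hi, hWC, hWD] at h3
  have h4 : k - 1 ≤ (W ∩ (C ∩ D)).card := by omega
  have h5 : W ∩ (C ∩ D) = C ∩ D :=
    Finset.eq_of_subset_of_card_le Finset.inter_subset_right (by omega)
  rw [← h5]; exact Finset.inter_subset_left

/-- if C∩D, C∩E, D∩E are all contained in a common k-set A meeting C,D in k-1,
then the triple is a star. -/
lemma star_of_subs {k : ℕ} {A C D E : Finset ℕ}
    (hAC : (A ∩ C).card = k - 1) (hAD : (A ∩ D).card = k - 1)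
    (hCD : (C ∩ D).card = k - 1) (hCE : (C ∩ E).card = k - 1) (hDE : (D ∩ E).card = k - 1)
    (h1 : C ∩ D ⊆ A) (h2 : C ∩ E ⊆ A) (h3 : D ∩ E ⊆ A) :
    C ∩ D = C ∩ E ∧ C ∩ D = D ∩ E := by
  constructor
  · exact eq_of_two_subs (Finset.subset_inter h1 Finset.inter_subset_left)
      (Finset.subset_inter h2 Finset.inter_subset_left) hCD hCE hAC
  · exact eq_of_two_subs
      (Finset.subset_inter h1 Finset.inter_subset_right)
      (Finset.subset_inter h3 Finset.inter_subset_left) hCD hDE hAD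

lemma inter_card_le {k : ℕ} {X Y : Finset ℕ} (hX : X.card = k) (hY : Y.card = k)
    (hne : X ≠ Y) : (X ∩ Y).card ≤ k - 1 := by
  have h1 : (X ∩ Y).card ≤ k := hX ▸ Finset.card_le_card Finset.inter_subset_left
  rcases Nat.lt_or_ge (X ∩ Y).card k with h | h
  · omega
  · exfalso
    have h2 : X ∩ Y = X :=
      Finset.eq_of_subset_of_card_le Finset.inter_subset_left (by omega)
    have h3 : X ∩ Y = Y :=
      Finset.eq_of_subset_of_card_le Finset.inter_subset_right (by omega)
    exact hne (h2 ▸ h3)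

lemma not_labellable_K5minusEdge : ¬ Labellable K5minusEdge := by
  rintro ⟨k, hk, ℓ, hinj, hcard, hadj⟩
  have hne : ∀ i j : Fin 5, i ≠ j → ℓ i ≠ ℓ j := fun i j h hh => h (hinj hh)
  have hadj' : ∀ i j : Fin 5, i ≠ j → ¬ ((i = 0 ∧ j = 1) ∨ (i = 1 ∧ j = 0)) →
      (ℓ i ∩ ℓ j).card = k - 1 := by
    intro i j h h'
    exact (hadj i j h).1 ((K5adj i j).2 ⟨h, h'⟩)
  set A := ℓ 0 with hA0
  set B := ℓ 1
  set C := ℓ 2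
  set D := ℓ 3
  set E := ℓ 4
  have hA : A.card = k := hcard 0
  have hB : B.card = k := hcard 1
  have hC : C.card = k := hcard 2
  have hD : D.card = k := hcard 3
  have hE : E.card = k := hcard 4
  have hAC : (A ∩ C).card = k - 1 := hadj' 0 2 (by decide) (by decide)
  have hAD : (A ∩ D).card = k - 1 := hadj' 0 3 (by decide) (by decide)
  have hAE : (A ∩ E).card = k - 1 := hadj' 0 4 (by decide) (by decide)
  have hBC : (B ∩ C).card = k - 1 := hadj' 1 2 (by decide) (by decide)
  have hBD : (B ∩ D).card = k - 1 := hadj' 1 3 (by decide) (by decide)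
  have hBE : (B ∩ E).card = k - 1 := hadj' 1 4 (by decide) (by decide)
  have hCD : (C ∩ D).card = k - 1 := hadj' 2 3 (by decide) (by decide)
  have hCE : (C ∩ E).card = k - 1 := hadj' 2 4 (by decide) (by decide)
  have hDE : (D ∩ E).card = k - 1 := hadj' 3 4 (by decide) (by decide)
  have hABne : A ≠ B := hne 0 1 (by decide)
  have hAB : (A ∩ B).card ≠ k - 1 := by
    intro h
    have hadj01 := (hadj 0 1 (by decide)).2 h
    rw [K5adj] at hadj01
    exact hadj01.2 (Or.inl ⟨rfl, rfl⟩)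
  have hABle : (A ∩ B).card ≤ k - 1 := inter_card_le hA hB hABne
  -- main case split: is {C, D, E} a star?
  by_cases hstar : C ∩ D = C ∩ E ∧ C ∩ D = D ∩ E
  · -- star case: C∩D is contained in both A and B
    have key : ∀ W : Finset ℕ, W.card = k → (W ∩ C).card = k - 1 →
        (W ∩ D).card = k - 1 → (W ∩ E).card = k - 1 → C ∩ D ⊆ W := by
      intro W hW hWC hWD hWE
      by_cases hx : ∃ x ∈ W, x ∉ C ∧ x ∉ D
      · obtain ⟨x, hx1, hx2, hx3⟩ := hx
        exact escape hk hW hWC hWD hCD hx1 hx2 hx3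
      · push_neg at hx
        have hWE' : W ∩ E ⊆ C ∩ D := by
          intro y hy
          rw [Finset.mem_inter] at hy
          rcases Classical.em (y ∈ C) with h | h
          · have : y ∈ C ∩ E := Finset.mem_inter.2 ⟨h, hy.2⟩
            rw [← hstar.1] at this; exact this
          · have hyD : y ∈ D := hx y hy.1 h
            have : y ∈ D ∩ E := Finset.mem_inter.2 ⟨hyD, hy.2⟩
            rw [← hstar.2] at this; exact this
        have : W ∩ E = C ∩ D :=
          Finset.eq_of_subset_of_card_le hWE' (by omega)
        rw [← this]; exact Finset.inter_subset_left
    have h1 : C ∩ D ⊆ A ∩ B :=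
      Finset.subset_inter (key A hA hAC hAD hAE) (key B hB hBC hBD hBE)
    have h2 := Finset.card_le_card h1
    omega
  · -- non-star case: E ⊆ C ∪ D, then A, B ⊆ C ∪ D
    have hEsub : E ⊆ C ∪ D := by
      by_contra hEC
      obtain ⟨x, hx1, hx2⟩ := Finset.not_subset.1 hEC
      rw [Finset.mem_union] at hx2
      push_neg at hx2
      have hECc : (E ∩ C).card = k - 1 := by rw [Finset.inter_comm]; exact hCE
      have hEDc : (E ∩ D).card = k - 1 := by rw [Finset.inter_comm]; exact hDE
      have hsub := escape hk hE hECc hEDc hCD hx1 hx2.1 hx2.2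
      refine hstar ⟨?_, ?_⟩
      · exact Finset.eq_of_subset_of_card_le
          (Finset.subset_inter Finset.inter_subset_left hsub) (by omega)
      · exact Finset.eq_of_subset_of_card_le
          (Finset.subset_inter Finset.inter_subset_right hsub) (by omega)
    have hCDu : (C ∪ D).card = k + 1 := by
      have := Finset.card_union_add_card_inter C D
      omega
    have key2 : ∀ W : Finset ℕ, W.card = k → (W ∩ C).card = k - 1 →
        (W ∩ D).card = k - 1 → (W ∩ E).card = k - 1 → W ⊆ C ∪ D := by
      intro W hW hWC hWD hWE
      by_contra hWs
      obtain ⟨x, hx1, hx2⟩ := Finset.not_subset.1 hWs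
      rw [Finset.mem_union] at hx2
      push_neg at hx2
      have hxE : x ∉ E := fun h => (Finset.mem_union.1 (hEsub h)).elim hx2.1 hx2.2
      have s1 : C ∩ D ⊆ W := escape hk hW hWC hWD hCD hx1 hx2.1 hx2.2
      have s2 : C ∩ E ⊆ W := escape hk hW hWC hWE hCE hx1 hx2.1 hxE
      have s3 : D ∩ E ⊆ W := escape hk hW hWD hWE hDE hx1 hx2.2 hxE
      exact hstar (star_of_subs hWC hWD hCD hCE hDE s1 s2 s3)
    have hAs : A ⊆ C ∪ D := key2 A hA hAC hAD hAE
    have hBs : B ⊆ C ∪ D := key2 B hB hBC hBD hBE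
    have hABu : (A ∪ B).card ≤ k + 1 := by
      rw [← hCDu]
      exact Finset.card_le_card (Finset.union_subset hAs hBs)
    have := Finset.card_union_add_card_inter A B
    omega

lemma labellable_of_fun (s : Set (Fin 5)) (f : Fin 5 → Finset ℕ)
    (hinj : ∀ u v : Fin 5, u ∈ s → v ∈ s → f u = f v → u = v)
    (hcard : ∀ v : Fin 5, v ∈ s → (f v).card = 2)
    (hiff : ∀ u v : Fin 5, u ∈ s → v ∈ s → u ≠ v →
      (K5minusEdge.Adj u v ↔ (f u ∩ f v).card = 1)) :
    Labellable (K5minusEdge.induce s) := by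
  refine ⟨2, by norm_num, fun v => f v, ?_, fun v => hcard v v.2, ?_⟩
  · intro u v h
    exact Subtype.ext (hinj u v u.2 v.2 h)
  · intro u v huv
    have h : (u : Fin 5) ≠ (v : Fin 5) := fun h => huv (Subtype.ext h)
    exact hiff u v u.2 v.2 h

lemma lab_aux (s : Set (Fin 5)) {m : Fin 5} (hm : m ∉ s) (f : Fin 5 → Finset ℕ)
    (h : ∀ u v : Fin 5, u ≠ m → v ≠ m →
      (f u = f v → u = v) ∧ (f u).card = 2 ∧
      (u ≠ v → ((u ≠ v ∧ ¬((u = 0 ∧ v = 1) ∨ (u = 1 ∧ v = 0))) ↔ (f u ∩ f v).card = 1))) :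
    Labellable (K5minusEdge.induce s) := by
  have key : ∀ u : Fin 5, u ∈ s → u ≠ m := fun u hu e => hm (e ▸ hu)
  refine labellable_of_fun s f ?_ ?_ ?_
  · intro u v hu hv
    exact (h u v (key u hu) (key v hv)).1
  · intro v hv
    exact (h v v (key v hv) (key v hv)).2.1
  · intro u v hu hv huv
    rw [K5adj]
    exact (h u v (key u hu) (key v hv)).2.2 huv

/-- The graph obtained from `K₅` by deleting a single edge is minimally
unlabellable: it is not labellable, but every proper induced subgraph of it is
labellable. -/
theorem K5_minus_edge_minimally_unlabellable :
    ¬ Labellable K5minusEdge ∧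
      ∀ s : Set (Fin 5), s ≠ Set.univ → Labellable (K5minusEdge.induce s) := by
  refine ⟨not_labellable_K5minusEdge, ?_⟩
  intro s hs
  by_cases h01 : (0 : Fin 5) ∈ s ∧ (1 : Fin 5) ∈ s
  · -- some m ∈ {2,3,4} is missing; the induced graph is in a K4 minus an edge
    obtain ⟨m, hm⟩ := (Set.ne_univ_iff_exists_notMem s).1 hs
    have hm2 : m = 2 ∨ m = 3 ∨ m = 4 := by
      fin_cases m
      · exact absurd h01.1 (by simpa using hm)
      · exact absurd h01.2 (by simpa using hm)
      · exact Or.inl rfl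
      · exact Or.inr (Or.inl rfl)
      · exact Or.inr (Or.inr rfl)
    obtain rfl | rfl | rfl := hm2
    · exact lab_aux s hm
        (fun v => if v = 0 then {1, 4} else if v = 1 then {2, 3}
          else if v = 3 then {1, 2} else {1, 3}) (by decide)
    · exact lab_aux s hm
        (fun v => if v = 0 then {1, 4} else if v = 1 then {2, 3}
          else if v = 2 then {1, 2} else {1, 3}) (by decide)
    · exact lab_aux s hm
        (fun v => if v = 0 then {1, 4} else if v = 1 then {2, 3}
          else if v = 2 then {1, 2} else {1, 3}) (by decide)
  · -- the induced graph is complete: star labelling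
    refine labellable_of_fun s (fun v => {5, (v : ℕ)}) ?_ ?_ ?_
    · intro u v _ _ h
      have h' : ({5, (u : ℕ)} : Finset ℕ) = {5, (v : ℕ)} := h
      have hu5 : (u : ℕ) ∈ ({5, (v : ℕ)} : Finset ℕ) := by rw [← h']; simp
      have : (u : ℕ) = (v : ℕ) := by
        rcases Finset.mem_insert.1 hu5 with h' | h'
        · exact absurd h' (by omega)
        · simpa using h'
      exact Fin.ext this
    · intro v _
      have : (v : ℕ) ≠ 5 := by omega
      rw [Finset.card_insert_of_notMem (by simpa using this.symm)]
      simp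
    · intro u v hu hv huv
      rw [K5adj]
      have huvn : (u : ℕ) ≠ (v : ℕ) := fun h => huv (Fin.ext h)
      constructor
      · intro _
        have : ({5, (u : ℕ)} : Finset ℕ) ∩ {5, (v : ℕ)} = {5} := by
          ext y
          simp only [Finset.mem_inter, Finset.mem_insert, Finset.mem_singleton]
          constructor
          · rintro ⟨h1 | h1, h2 | h2⟩ <;> omega
          · rintro rfl; exact ⟨Or.inl rfl, Or.inl rfl⟩
        rw [this]; simp
      · intro _
        refine ⟨huv, ?_⟩
        rintro (⟨rfl, rfl⟩ | ⟨rfl, rfl⟩)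
        · exact h01 ⟨hu, hv⟩
        · exact h01 ⟨hv, hu⟩
end

section
/- The 6-vertex graph with vertex set {1,2,3,4,5,6} and edge set {{1,2},{1,3},{2,3},{2,4},{3,4},{1,5},{5,6},{6,4}} (that is, K_4 minus the edge {1,4} on vertices {1,2,3,4}, together with the path 1–5–6–4 joining the two nonadjacent vertices) is minimally unlabellable: it is not labellable, but every proper induced subgraph of it is labellable. -/
/-- The 6-vertex graph with vertex set `{1,…,6}` (vertex `i` is encoded as
`i - 1 : Fin 6`) and edge set
`{{1,2},{1,3},{2,3},{2,4},{3,4},{1,5},{5,6},{6,4}}`: `K₄` minus the edge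
`{1,4}` on `{1,2,3,4}`, together with the path `1-5-6-4`. -/
def K4minusEdgePlusPath : SimpleGraph (Fin 6) :=
  SimpleGraph.fromRel (fun a b =>
    (a.val + 1, b.val + 1) ∈
      [(1, 2), (1, 3), (2, 3), (2, 4), (3, 4), (1, 5), (5, 6), (6, 4)])


open Finset

instance : DecidableRel K4minusEdgePlusPath.Adj := fun a b =>
  decidable_of_iff (a ≠ b ∧ ((a.val + 1, b.val + 1) ∈
      [(1, 2), (1, 3), (2, 3), (2, 4), (3, 4), (1, 5), (5, 6), (6, 4)] ∨ (b.val + 1, a.val + 1) ∈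
      [(1, 2), (1, 3), (2, 3), (2, 4), (3, 4), (1, 5), (5, 6), (6, 4)])) Iff.rfl


lemma inter_card_lt {k : ℕ} {X Y : Finset ℕ} (hX : X.card = k) (hY : Y.card = k)
    (hne : X ≠ Y) : (X ∩ Y).card < k := by
  have h1 : (X ∩ Y).card ≤ k := hX ▸ card_le_card inter_subset_left
  rcases lt_or_eq_of_le h1 with h | h
  · exact h
  · exfalso
    have h2 : X ∩ Y = X := eq_of_subset_of_card_le inter_subset_left (by omega)
    have h3 : X ⊆ Y := inter_eq_left.mp h2
    exact hne (eq_of_subset_of_card_le h3 (by omega))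

lemma deadEnd {k : ℕ} {E B : Finset ℕ} (hEk : E.card = k) (hBk : B.card = k)
    (hlow : k - 1 ≤ (E ∩ B).card) (hne : (E ∩ B).card ≠ k - 1) (hEB : E ≠ B) :
    False := by
  have h1 : (E ∩ B).card < k := inter_card_lt hEk hBk hEB
  omega

/-- Dead-end: `E` is a `k`-set meeting the `k`-set `G` in all of `A ∖ {m}`-part of
`insert x T ⊆ G ∩ A` plus the extra element `u ∈ G \ A`. -/
lemma deadEnd2 {k : ℕ} {E G A T : Finset ℕ} {x u m : ℕ}
    (hEk : E.card = k) (hGk : G.card = k) (hk2 : 2 ≤ k)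
    (hTcard : T.card = k - 2)
    (hTA : T ⊆ A) (hxA : x ∈ A) (hxT : x ∉ T)
    (hxG : x ∈ G) (hTG : T ⊆ G)
    (huE : u ∈ E) (huG : u ∈ G) (huA : u ∉ A)
    (hAinE : ∀ e, e ∈ A → e ≠ m → e ∈ E)
    (hne : (E ∩ G).card ≠ k - 1) (hEG : E ≠ G) : False := by
  have hsub : insert u ((insert x T) \ {m}) ⊆ E ∩ G := by
    intro e he
    rcases mem_insert.mp he with h' | h'
    · exact h' ▸ mem_inter.mpr ⟨huE, huG⟩
    · have he1 : e ∈ insert x T := (mem_sdiff.mp h').1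
      have he2 : e ≠ m := by have := (mem_sdiff.mp h').2; simpa using this
      have heA : e ∈ A := by
        rcases mem_insert.mp he1 with h'' | h''
        · exact h'' ▸ hxA
        · exact hTA h''
      have heG : e ∈ G := by
        rcases mem_insert.mp he1 with h'' | h''
        · exact h'' ▸ hxG
        · exact hTG h''
      exact mem_inter.mpr ⟨hAinE e heA he2, heG⟩
  have hnm : u ∉ (insert x T) \ {m} := by
    intro hh
    rcases mem_insert.mp (mem_sdiff.mp hh).1 with h'' | h''
    · exact huA (h'' ▸ hxA)
    · exact huA (hTA h'')
  have h1 : (insert x T).card = k - 1 := by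
    rw [card_insert_of_notMem hxT]; omega
  have h2 : (insert x T).card ≤ ((insert x T) \ {m}).card + 1 := by
    have := card_le_card_sdiff_add_card (s := insert x T) (t := {m})
    simpa using this
  have h3 := card_le_card hsub
  rw [card_insert_of_notMem hnm] at h3
  exact deadEnd hEk hGk (by omega) hne hEG

/-- Dead-end: `insert w T` is a `(k-1)`-subset of both `F` and `C`. -/
lemma deadEnd3 {k : ℕ} {F C T : Finset ℕ} {w : ℕ}
    (hFk : F.card = k) (hCk : C.card = k) (hk2 : 2 ≤ k)
    (hTcard : T.card = k - 2)
    (hwF : w ∈ F) (hwC : w ∈ C) (hTF : T ⊆ F) (hTC : T ⊆ C) (hwT : w ∉ T)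
    (hne : (F ∩ C).card ≠ k - 1) (hFC : F ≠ C) : False := by
  have hsub : insert w T ⊆ F ∩ C := by
    intro e he
    rcases mem_insert.mp he with h' | h'
    · exact h' ▸ mem_inter.mpr ⟨hwF, hwC⟩
    · exact mem_inter.mpr ⟨hTF h', hTC h'⟩
  have h3 := card_le_card hsub
  rw [card_insert_of_notMem hwT] at h3
  exact deadEnd hFk hCk (by omega) hne hFC

set_option maxHeartbeats 0 in
lemma key {k : ℕ} {T A D B C E F : Finset ℕ} {x z w : ℕ}
    (hk2 : 2 ≤ k)
    (hAk : A.card = k) (hDk : D.card = k) (hEk : E.card = k) (hFk : F.card = k)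
    (hTcard : T.card = k - 2)
    (hAD : A ∩ D = T)
    (hxA : x ∈ A) (hxT : x ∉ T)
    (hD' : D \ T = {z, w}) (hzw : z ≠ w)
    (hB : B = insert x (insert z T)) (hC : C = insert x (insert w T))
    (hEA : (E ∩ A).card = k - 1)
    (hEB : (E ∩ B).card ≠ k - 1) (hEC : (E ∩ C).card ≠ k - 1)
    (hFD : (F ∩ D).card = k - 1)
    (hFB : (F ∩ B).card ≠ k - 1) (hFC : (F ∩ C).card ≠ k - 1)
    (hEF : (E ∩ F).card = k - 1)
    (hEneB : E ≠ B) (hEneC : E ≠ C) (hFneB : F ≠ B) (hFneC : F ≠ C) : False := by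
  have hk1 : 1 ≤ k := by clear * - hk2; omega
  have hTA : T ⊆ A := hAD ▸ inter_subset_left
  have hTD : T ⊆ D := hAD ▸ inter_subset_right
  have hzDT : z ∈ D \ T := by rw [hD']; exact mem_insert_self _ _
  have hwDT : w ∈ D \ T := by rw [hD']; exact mem_insert_of_mem (mem_singleton_self _)
  have hzD : z ∈ D := (mem_sdiff.mp hzDT).1
  have hzT : z ∉ T := (mem_sdiff.mp hzDT).2
  have hwD : w ∈ D := (mem_sdiff.mp hwDT).1
  have hwT : w ∉ T := (mem_sdiff.mp hwDT).2
  have hzA : z ∉ A := fun h => hzT (hAD ▸ mem_inter.mpr ⟨h, hzD⟩)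
  have hwA : w ∉ A := fun h => hwT (hAD ▸ mem_inter.mpr ⟨h, hwD⟩)
  have hxz : x ≠ z := fun h => hzA (h ▸ hxA)
  have hxw : x ≠ w := fun h => hwA (h ▸ hxA)
  have hxD : x ∉ D := by
    intro h
    have h1 : x ∈ D \ T := mem_sdiff.mpr ⟨h, hxT⟩
    rw [hD'] at h1
    rcases mem_insert.mp h1 with h' | h'
    · exact hxz h'
    · exact hxw (mem_singleton.mp h')
  -- memberships in B and C
  have hxB : x ∈ B := hB ▸ mem_insert_self _ _
  have hzB : z ∈ B := hB ▸ mem_insert_of_mem (mem_insert_self _ _)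
  have hTB : T ⊆ B := fun t ht => hB ▸ mem_insert_of_mem (mem_insert_of_mem ht)
  have hxC : x ∈ C := hC ▸ mem_insert_self _ _
  have hwC : w ∈ C := hC ▸ mem_insert_of_mem (mem_insert_self _ _)
  have hTC : T ⊆ C := fun t ht => hC ▸ mem_insert_of_mem (mem_insert_of_mem ht)
  -- cardinalities of B and C
  have hxzT : x ∉ insert z T := by
    intro h
    rcases mem_insert.mp h with h' | h'
    · exact hxz h'
    · exact hxT h'
  have hxwT : x ∉ insert w T := by
    intro h
    rcases mem_insert.mp h with h' | h'
    · exact hxw h'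
    · exact hxT h'
  have hBk : B.card = k := by
    rw [hB, card_insert_of_notMem hxzT, card_insert_of_notMem hzT]
    clear * - hTcard hk2; omega
  have hCk : C.card = k := by
    rw [hC, card_insert_of_notMem hxwT, card_insert_of_notMem hwT]
    clear * - hTcard hk2; omega
  -- decompose E relative to A
  have hEsd : (E ∩ A).card + (E \ A).card = E.card := card_inter_add_card_sdiff E A
  have hu1 : (E \ A).card = 1 := by clear * - hEsd hEA hEk hk2; omega
  obtain ⟨u, hu⟩ := card_eq_one.mp hu1
  have hAsd : (A ∩ E).card + (A \ E).card = A.card := card_inter_add_card_sdiff A E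
  have hAE : (A ∩ E).card = k - 1 := by rw [inter_comm]; exact hEA
  have hm1 : (A \ E).card = 1 := by clear * - hAsd hAE hAk hk2; omega
  obtain ⟨m, hm⟩ := card_eq_one.mp hm1
  have huE : u ∈ E := (mem_sdiff.mp (hu ▸ mem_singleton_self u)).1
  have huA : u ∉ A := (mem_sdiff.mp (hu ▸ mem_singleton_self u)).2
  have hAinE : ∀ e, e ∈ A → e ≠ m → e ∈ E := by
    intro e heA hem
    by_contra h
    exact hem (mem_singleton.mp (hm ▸ mem_sdiff.mpr ⟨heA, h⟩))
  -- decompose F relative to D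
  have hFsd : (F ∩ D).card + (F \ D).card = F.card := card_inter_add_card_sdiff F D
  have hv1 : (F \ D).card = 1 := by clear * - hFsd hFD hFk hk2; omega
  obtain ⟨v, hv⟩ := card_eq_one.mp hv1
  have hDsd : (D ∩ F).card + (D \ F).card = D.card := card_inter_add_card_sdiff D F
  have hDF : (D ∩ F).card = k - 1 := by rw [inter_comm]; exact hFD
  have hm'1 : (D \ F).card = 1 := by clear * - hDsd hDF hDk hk2; omega
  obtain ⟨m', hm'⟩ := card_eq_one.mp hm'1
  have hvF : v ∈ F := (mem_sdiff.mp (hv ▸ mem_singleton_self v)).1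
  have hvD : v ∉ D := (mem_sdiff.mp (hv ▸ mem_singleton_self v)).2
  have hm'D : m' ∈ D := (mem_sdiff.mp (hm' ▸ mem_singleton_self m')).1
  have hm'F : m' ∉ F := (mem_sdiff.mp (hm' ▸ mem_singleton_self m')).2
  have hDinF : ∀ e, e ∈ D → e ≠ m' → e ∈ F := by
    intro e heD hem
    by_contra h
    exact hem (mem_singleton.mp (hm' ▸ mem_sdiff.mpr ⟨heD, h⟩))
  -- u avoids z and w
  have huz : u ≠ z := fun h =>
    deadEnd2 hEk hBk hk2 hTcard hTA hxA hxT hxB hTB huE (h ▸ hzB) huA hAinE hEB hEneB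
  have huw : u ≠ w := fun h =>
    deadEnd2 hEk hCk hk2 hTcard hTA hxA hxT hxC hTC huE (h ▸ hwC) huA hAinE hEC hEneC
  -- v avoids x
  have hvx : v ≠ x := fun h =>
    deadEnd2 hFk hBk hk2 hTcard hTD hzD hzT hzB hTB hvF (h ▸ hxB) hvD hDinF hFB hFneB
  -- m' lies in T
  have hm'T : m' ∈ T := by
    by_contra h
    have h1 : m' ∈ D \ T := mem_sdiff.mpr ⟨hm'D, h⟩
    rw [hD'] at h1
    rcases mem_insert.mp h1 with h' | h'
    · -- m' = z : then insert w T ⊆ F ∩ C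
      subst h'
      have hwF : w ∈ F := hDinF w hwD (fun hh => hzw hh.symm)
      have hTF : T ⊆ F := fun t ht => hDinF t (hTD ht) (fun hh => h (hh ▸ ht))
      exact deadEnd3 hFk hCk hk2 hTcard hwF hwC hTF hTC hwT hFC hFneC
    · -- m' = w : then insert z T ⊆ F ∩ B
      have h' := mem_singleton.mp h'
      subst h'
      have hzF : z ∈ F := hDinF z hzD hzw
      have hTF : T ⊆ F := fun t ht => hDinF t (hTD ht) (fun hh => h (hh ▸ ht))
      exact deadEnd3 hFk hBk hk2 hTcard hzF hzB hTF hTB hzT hFB hFneB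
  have hk3 : 3 ≤ k := by
    have : 0 < T.card := card_pos.mpr ⟨m', hm'T⟩
    clear * - this hTcard hk2; omega
  -- final count : E ∩ F ⊆ insert v (F ∩ T)
  have hfin : E ∩ F ⊆ insert v (F ∩ T) := by
    intro e he
    have heE := (mem_inter.mp he).1
    have heF := (mem_inter.mp he).2
    by_cases hev : e = v
    · exact hev ▸ mem_insert_self _ _
    · have heD : e ∈ D := by
        by_contra h
        have h1 : e ∈ F \ D := mem_sdiff.mpr ⟨heF, h⟩
        rw [hv] at h1
        exact hev (mem_singleton.mp h1)
      have heu : e ≠ u := by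
        intro h
        subst h
        have h1 : e ∈ D \ T := mem_sdiff.mpr ⟨heD, fun hh => huA (hTA hh)⟩
        rw [hD'] at h1
        rcases mem_insert.mp h1 with h' | h'
        · exact huz h'
        · exact huw (mem_singleton.mp h')
      have heA : e ∈ A := by
        by_contra h
        have h1 : e ∈ E \ A := mem_sdiff.mpr ⟨heE, h⟩
        rw [hu] at h1
        exact heu (mem_singleton.mp h1)
      have heT : e ∈ T := hAD ▸ mem_inter.mpr ⟨heA, heD⟩
      exact mem_insert_of_mem (mem_inter.mpr ⟨heF, heT⟩)
  have hft : F ∩ T ⊆ T.erase m' := by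
    intro t ht
    exact mem_erase.mpr ⟨fun hh => hm'F (hh ▸ (mem_inter.mp ht).1), (mem_inter.mp ht).2⟩
  have h1 := card_le_card hfin
  have h2 := card_le_card hft
  have h3 : (T.erase m').card = T.card - 1 := card_erase_of_mem hm'T
  have h4 : (insert v (F ∩ T)).card ≤ (F ∩ T).card + 1 := card_insert_le _ _
  rw [hEF] at h1
  clear * - h1 h2 h3 h4 hTcard hk3; omega

lemma pick {k : ℕ} {T X Y : Finset ℕ} (hT : T ⊆ X) (hT2 : T ⊆ Y)
    (hXY : (X ∩ Y).card = k - 1) (hTcard : T.card = k - 2) (hk2 : 2 ≤ k) :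
    ∃ p, X ∩ (Y \ T) = {p} := by
  have h1 : (X ∩ (Y \ T)).card = 1 := by
    rw [← inter_sdiff_assoc, card_sdiff_of_subset (subset_inter hT hT2), hXY, hTcard]
    clear * - hk2; omega
  exact card_eq_one.mp h1

lemma buildB {k : ℕ} {T X : Finset ℕ} {p q : ℕ} (hTX : T ⊆ X) (hXk : X.card = k)
    (hTcard : T.card = k - 2) (hk2 : 2 ≤ k) (hp : p ∈ X) (hq : q ∈ X)
    (hpT : p ∉ T) (hqT : q ∉ T) (hpq : p ≠ q) : X = insert p (insert q T) := by
  have h1 : (X \ T).card = 2 := by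
    rw [card_sdiff_of_subset hTX, hXk, hTcard]
    clear * - hk2; omega
  have h2 : {p, q} ⊆ X \ T := by
    intro e he
    rcases mem_insert.mp he with h' | h'
    · exact h' ▸ mem_sdiff.mpr ⟨hp, hpT⟩
    · exact (mem_singleton.mp h') ▸ mem_sdiff.mpr ⟨hq, hqT⟩
  have h3 : ({p, q} : Finset ℕ).card = 2 := card_pair hpq
  have h4 : ({p, q} : Finset ℕ) = X \ T := eq_of_subset_of_card_le h2 (by clear * - h1 h3; omega)
  have h5 := sdiff_union_of_subset hTX
  rw [← h4] at h5
  have h6 : insert p (insert q T) = ({p, q} : Finset ℕ) ∪ T := by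
    ext e; simp [or_assoc]
  rw [h6]
  exact h5.symm


lemma part2helper {k : ℕ} (hk : 0 < k) (i : Fin 6) (L : Fin 6 → Finset ℕ)
    (hinj : Function.Injective L) (hcard : ∀ v, (L v).card = k)
    (hadj : ∀ u v : Fin 6, u ≠ i → v ≠ i → u ≠ v →
      (K4minusEdgePlusPath.Adj u v ↔ (L u ∩ L v).card = k - 1))
    {s : Set (Fin 6)} (hi : i ∉ s) : Labellable (K4minusEdgePlusPath.induce s) := by
  refine ⟨k, hk, fun v => L v.val, ?_, fun v => hcard _, ?_⟩
  · intro u v h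
    exact Subtype.ext (hinj h)
  · intro u v huv
    have h1 : (u : Fin 6) ≠ i := fun h => hi (h ▸ u.2)
    have h2 : (v : Fin 6) ≠ i := fun h => hi (h ▸ v.2)
    have h3 : (u : Fin 6) ≠ (v : Fin 6) := fun h => huv (Subtype.ext h)
    exact hadj u v h1 h2 h3

set_option maxHeartbeats 1000000 in
lemma part1 : ¬ Labellable K4minusEdgePlusPath := by
  rintro ⟨k, hk, ℓ, hinj, hcard, hadj⟩
  -- adjacency facts
  have e10 : (ℓ 1 ∩ ℓ 0).card = k - 1 := (hadj 1 0 (by decide)).mp (by decide)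
  have e13 : (ℓ 1 ∩ ℓ 3).card = k - 1 := (hadj 1 3 (by decide)).mp (by decide)
  have e20 : (ℓ 2 ∩ ℓ 0).card = k - 1 := (hadj 2 0 (by decide)).mp (by decide)
  have e23 : (ℓ 2 ∩ ℓ 3).card = k - 1 := (hadj 2 3 (by decide)).mp (by decide)
  have e12 : (ℓ 1 ∩ ℓ 2).card = k - 1 := (hadj 1 2 (by decide)).mp (by decide)
  have e40 : (ℓ 4 ∩ ℓ 0).card = k - 1 := (hadj 4 0 (by decide)).mp (by decide)
  have e53 : (ℓ 5 ∩ ℓ 3).card = k - 1 := (hadj 5 3 (by decide)).mp (by decide)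
  have e45 : (ℓ 4 ∩ ℓ 5).card = k - 1 := (hadj 4 5 (by decide)).mp (by decide)
  have e54 : (ℓ 5 ∩ ℓ 4).card = k - 1 := (hadj 5 4 (by decide)).mp (by decide)
  -- non-adjacency facts
  have n03 : (ℓ 0 ∩ ℓ 3).card ≠ k - 1 :=
    fun h => (by decide : ¬ K4minusEdgePlusPath.Adj 0 3) ((hadj 0 3 (by decide)).mpr h)
  have n41 : (ℓ 4 ∩ ℓ 1).card ≠ k - 1 :=
    fun h => (by decide : ¬ K4minusEdgePlusPath.Adj 4 1) ((hadj 4 1 (by decide)).mpr h)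
  have n42 : (ℓ 4 ∩ ℓ 2).card ≠ k - 1 :=
    fun h => (by decide : ¬ K4minusEdgePlusPath.Adj 4 2) ((hadj 4 2 (by decide)).mpr h)
  have n51 : (ℓ 5 ∩ ℓ 1).card ≠ k - 1 :=
    fun h => (by decide : ¬ K4minusEdgePlusPath.Adj 5 1) ((hadj 5 1 (by decide)).mpr h)
  have n52 : (ℓ 5 ∩ ℓ 2).card ≠ k - 1 :=
    fun h => (by decide : ¬ K4minusEdgePlusPath.Adj 5 2) ((hadj 5 2 (by decide)).mpr h)
  -- distinctness of labels
  have ne03 : ℓ 0 ≠ ℓ 3 := hinj.ne (by decide)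
  have ne12 : ℓ 1 ≠ ℓ 2 := hinj.ne (by decide)
  have ne41 : ℓ 4 ≠ ℓ 1 := hinj.ne (by decide)
  have ne42 : ℓ 4 ≠ ℓ 2 := hinj.ne (by decide)
  have ne51 : ℓ 5 ≠ ℓ 1 := hinj.ne (by decide)
  have ne52 : ℓ 5 ≠ ℓ 2 := hinj.ne (by decide)
  -- k ≥ 2
  have hlt03 : (ℓ 0 ∩ ℓ 3).card < k := inter_card_lt (hcard 0) (hcard 3) ne03
  have hk2 : 2 ≤ k := by clear * - hk hlt03 n03; omega
  -- T := ℓ 0 ∩ ℓ 3 has k - 2 elements and lies in ℓ 1 and ℓ 2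
  have hsubT : ∀ i : Fin 6, (ℓ i ∩ ℓ 0) ∩ (ℓ i ∩ ℓ 3) ⊆ ℓ 0 ∩ ℓ 3 := by
    intro i e he
    have h1 := mem_inter.mp he
    exact mem_inter.mpr ⟨(mem_inter.mp h1.1).2, (mem_inter.mp h1.2).2⟩
  have hWcard : ∀ i : Fin 6, (ℓ i ∩ ℓ 0).card = k - 1 → (ℓ i ∩ ℓ 3).card = k - 1 →
      k - 2 ≤ ((ℓ i ∩ ℓ 0) ∩ (ℓ i ∩ ℓ 3)).card := by
    intro i h1 h2
    have h3 := card_union_add_card_inter (ℓ i ∩ ℓ 0) (ℓ i ∩ ℓ 3)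
    have h4 : (ℓ i ∩ ℓ 0) ∪ (ℓ i ∩ ℓ 3) ⊆ ℓ i := union_subset inter_subset_left inter_subset_left
    have h5 : ((ℓ i ∩ ℓ 0) ∪ (ℓ i ∩ ℓ 3)).card ≤ k := le_trans (card_le_card h4) (le_of_eq (hcard i))
    clear * - h1 h2 h3 h5 hk2; omega
  have hW1 := hWcard 1 e10 e13
  have hTcard : (ℓ 0 ∩ ℓ 3).card = k - 2 := by
    have h1 := le_trans hW1 (card_le_card (hsubT 1))
    clear * - h1 hlt03 n03 hk2; omega
  have hTB : ℓ 0 ∩ ℓ 3 ⊆ ℓ 1 := by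
    have h1 : (ℓ 1 ∩ ℓ 0) ∩ (ℓ 1 ∩ ℓ 3) = ℓ 0 ∩ ℓ 3 :=
      eq_of_subset_of_card_le (hsubT 1) (by clear * - hW1 hTcard; omega)
    rw [← h1]
    intro e he
    exact (mem_inter.mp (mem_inter.mp he).1).1
  have hW2 := hWcard 2 e20 e23
  have hTC : ℓ 0 ∩ ℓ 3 ⊆ ℓ 2 := by
    have h1 : (ℓ 2 ∩ ℓ 0) ∩ (ℓ 2 ∩ ℓ 3) = ℓ 0 ∩ ℓ 3 :=
      eq_of_subset_of_card_le (hsubT 2) (by clear * - hW2 hTcard; omega)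
    rw [← h1]
    intro e he
    exact (mem_inter.mp (mem_inter.mp he).1).1
  have hTA : ℓ 0 ∩ ℓ 3 ⊆ ℓ 0 := inter_subset_left
  have hTD : ℓ 0 ∩ ℓ 3 ⊆ ℓ 3 := inter_subset_right
  -- the special elements p q p' q'
  obtain ⟨p, hp⟩ := pick hTB hTA e10 hTcard hk2
  obtain ⟨q, hq⟩ := pick hTB hTD e13 hTcard hk2
  obtain ⟨p', hp'⟩ := pick hTC hTA e20 hTcard hk2
  obtain ⟨q', hq'⟩ := pick hTC hTD e23 hTcard hk2
  have hpm : p ∈ ℓ 1 ∩ (ℓ 0 \ (ℓ 0 ∩ ℓ 3)) := hp ▸ mem_singleton_self p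
  have hqm : q ∈ ℓ 1 ∩ (ℓ 3 \ (ℓ 0 ∩ ℓ 3)) := hq ▸ mem_singleton_self q
  have hpm' : p' ∈ ℓ 2 ∩ (ℓ 0 \ (ℓ 0 ∩ ℓ 3)) := hp' ▸ mem_singleton_self p'
  have hqm' : q' ∈ ℓ 2 ∩ (ℓ 3 \ (ℓ 0 ∩ ℓ 3)) := hq' ▸ mem_singleton_self q'
  have hp1 : p ∈ ℓ 1 := (mem_inter.mp hpm).1
  have hp0 : p ∈ ℓ 0 \ (ℓ 0 ∩ ℓ 3) := (mem_inter.mp hpm).2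
  have hq1 : q ∈ ℓ 1 := (mem_inter.mp hqm).1
  have hq3 : q ∈ ℓ 3 \ (ℓ 0 ∩ ℓ 3) := (mem_inter.mp hqm).2
  have hp2 : p' ∈ ℓ 2 := (mem_inter.mp hpm').1
  have hp0' : p' ∈ ℓ 0 \ (ℓ 0 ∩ ℓ 3) := (mem_inter.mp hpm').2
  have hq2 : q' ∈ ℓ 2 := (mem_inter.mp hqm').1
  have hq3' : q' ∈ ℓ 3 \ (ℓ 0 ∩ ℓ 3) := (mem_inter.mp hqm').2
  -- elements of ℓ0\T and ℓ3\T are distinct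
  have hdisj : ∀ e, e ∈ ℓ 0 \ (ℓ 0 ∩ ℓ 3) → e ∈ ℓ 3 \ (ℓ 0 ∩ ℓ 3) → False := by
    intro e h1 h2
    exact (mem_sdiff.mp h1).2 (mem_inter.mpr ⟨(mem_sdiff.mp h1).1, (mem_sdiff.mp h2).1⟩)
  have hpq : p ≠ q := fun h => hdisj p hp0 (h ▸ hq3)
  have hpq' : p' ≠ q' := fun h => hdisj p' hp0' (h ▸ hq3')
  -- structure of ℓ1 and ℓ2
  have hB1 : ℓ 1 = insert p (insert q (ℓ 0 ∩ ℓ 3)) :=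
    buildB hTB (hcard 1) hTcard hk2 hp1 hq1 (mem_sdiff.mp hp0).2 (mem_sdiff.mp hq3).2 hpq
  have hB2 : ℓ 2 = insert p' (insert q' (ℓ 0 ∩ ℓ 3)) :=
    buildB hTC (hcard 2) hTcard hk2 hp2 hq2 (mem_sdiff.mp hp0').2 (mem_sdiff.mp hq3').2 hpq'
  -- the common element r of ℓ1 and ℓ2 outside T
  have hTBC : ℓ 0 ∩ ℓ 3 ⊆ ℓ 1 ∩ ℓ 2 := subset_inter hTB hTC
  have hr1 : ((ℓ 1 ∩ ℓ 2) \ (ℓ 0 ∩ ℓ 3)).card = 1 := by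
    rw [card_sdiff_of_subset hTBC, e12, hTcard]
    clear * - hk2; omega
  obtain ⟨r, hr⟩ := card_eq_one.mp hr1
  have hrm : r ∈ (ℓ 1 ∩ ℓ 2) \ (ℓ 0 ∩ ℓ 3) := hr ▸ mem_singleton_self r
  have hrT : r ∉ ℓ 0 ∩ ℓ 3 := (mem_sdiff.mp hrm).2
  have hr1' : r ∈ ℓ 1 := (mem_inter.mp (mem_sdiff.mp hrm).1).1
  have hr2' : r ∈ ℓ 2 := (mem_inter.mp (mem_sdiff.mp hrm).1).2
  have hrpq : r = p ∨ r = q := by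
    rw [hB1] at hr1'
    rcases mem_insert.mp hr1' with h' | h'
    · exact Or.inl h'
    · rcases mem_insert.mp h' with h'' | h''
      · exact Or.inr h''
      · exact absurd h'' hrT
  have hrpq' : r = p' ∨ r = q' := by
    rw [hB2] at hr2'
    rcases mem_insert.mp hr2' with h' | h'
    · exact Or.inl h'
    · rcases mem_insert.mp h' with h'' | h''
      · exact Or.inr h''
      · exact absurd h'' hrT
  rcases hrpq with hrp | hrq
  · rcases hrpq' with hrp' | hrq'
    · -- p = p' : apply key with A = ℓ0, D = ℓ3
      have hpp' : p' = p := hrp'.symm.trans hrp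
      have hqq' : q ≠ q' := by
        intro h
        apply ne12
        rw [hB1, hB2, hpp', h]
      have hD' : ℓ 3 \ (ℓ 0 ∩ ℓ 3) = {q, q'} := by
        have hsub : ({q, q'} : Finset ℕ) ⊆ ℓ 3 \ (ℓ 0 ∩ ℓ 3) := by
          intro e he
          rcases mem_insert.mp he with h' | h'
          · exact h' ▸ hq3
          · exact (mem_singleton.mp h') ▸ hq3'
        have hc1 : (ℓ 3 \ (ℓ 0 ∩ ℓ 3)).card = 2 := by
          rw [card_sdiff_of_subset hTD, hcard 3, hTcard]
          clear * - hk2; omega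
        have hc2 : ({q, q'} : Finset ℕ).card = 2 := card_pair hqq'
        exact (eq_of_subset_of_card_le hsub (by clear * - hc1 hc2; omega)).symm
      exact key hk2 (hcard 0) (hcard 3) (hcard 4) (hcard 5) hTcard rfl
        (mem_sdiff.mp hp0).1 (mem_sdiff.mp hp0).2 hD' hqq' hB1
        (by rw [hB2, hpp']) e40 n41 n42 e53 n51 n52 e45 ne41 ne42 ne51 ne52
    · -- p = q' : impossible
      exact hdisj p hp0 (by rw [← hrp, hrq']; exact hq3')
  · rcases hrpq' with hrp' | hrq'
    · -- q = p' : impossible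
      exact hdisj p' hp0' (by rw [← hrp', hrq]; exact hq3)
    · -- q = q' : apply key with A = ℓ3, D = ℓ0
      have hqq' : q' = q := hrq'.symm.trans hrq
      have hpp' : p ≠ p' := by
        intro h
        apply ne12
        rw [hB1, hB2, hqq', h]
      have hD' : ℓ 0 \ (ℓ 0 ∩ ℓ 3) = {p, p'} := by
        have hsub : ({p, p'} : Finset ℕ) ⊆ ℓ 0 \ (ℓ 0 ∩ ℓ 3) := by
          intro e he
          rcases mem_insert.mp he with h' | h'
          · exact h' ▸ hp0
          · exact (mem_singleton.mp h') ▸ hp0'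
        have hc1 : (ℓ 0 \ (ℓ 0 ∩ ℓ 3)).card = 2 := by
          rw [card_sdiff_of_subset hTA, hcard 0, hTcard]
          clear * - hk2; omega
        have hc2 : ({p, p'} : Finset ℕ).card = 2 := card_pair hpp'
        exact (eq_of_subset_of_card_le hsub (by clear * - hc1 hc2; omega)).symm
      exact key hk2 (hcard 3) (hcard 0) (hcard 5) (hcard 4) hTcard (inter_comm _ _)
        (mem_sdiff.mp hq3).1 (mem_sdiff.mp hq3).2 hD' hpp'
        (hB1.trans (Finset.insert_comm p q _))
        (by rw [hB2, hqq']; exact Finset.insert_comm p' q _)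
        e53 n51 n52 e40 n41 n42 e54 ne51 ne52 ne41 ne42

/-- This 6-vertex graph is minimally unlabellable: it is not labellable, but
every proper induced subgraph of it is labellable. -/
theorem K4minusEdgePlusPath_minimally_unlabellable :
    ¬ Labellable K4minusEdgePlusPath ∧
      ∀ s : Set (Fin 6), s ≠ Set.univ →
        Labellable (K4minusEdgePlusPath.induce s) := by
  constructor
  · exact part1
  · intro s hs
    have h : ∃ i : Fin 6, i ∉ s := by
      by_contra h
      push_neg at h
      exact hs (Set.eq_univ_iff_forall.mpr h)
    obtain ⟨i, hi⟩ := h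
    fin_cases i
    · exact part2helper (k := 2) (by norm_num) 0 ![{7,8},{1,2},{1,3},{1,4},{5,6},{4,5}]
        (by decide) (by decide) (by decide) hi
    · exact part2helper (k := 2) (by norm_num) 1 ![{1,2},{7,8},{2,3},{3,4},{5,1},{4,5}]
        (by decide) (by decide) (by decide) hi
    · exact part2helper (k := 2) (by norm_num) 2 ![{1,2},{2,3},{7,8},{3,4},{5,1},{4,5}]
        (by decide) (by decide) (by decide) hi
    · exact part2helper (k := 2) (by norm_num) 3 ![{1,2},{1,3},{1,4},{7,8},{2,5},{5,6}]
        (by decide) (by decide) (by decide) hi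
    · exact part2helper (k := 3) (by norm_num) 4 ![{0,1,2},{0,1,3},{0,1,4},{0,3,4},{6,7,8},{3,4,5}]
        (by decide) (by decide) (by decide) hi
    · exact part2helper (k := 3) (by norm_num) 5 ![{0,3,4},{0,1,3},{0,1,4},{0,1,2},{3,4,5},{6,7,8}]
        (by decide) (by decide) (by decide) hi
end
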